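/- arXiv:2509.12848 — 3 statements merged into one kernel-verified Lean document; each statement's English description precedes it below -/
import Mathlib

section
/- Lipschitz regularity of subsolutions: assume the steady assumptions and, in addition, that for each 1 ≤ i ≤ N either H_i satisfies (Hcoercive) on closure(E_i), or there exists a̲_i > 0 such that a_i ≥ a̲_i on closure(E_i). Then every bounded viscosity subsolution u of problem (P) is Lipschitz continuous on the set Γ^δ := { x ∈ Γ : ρ(x, v_i) > δ for all 1 ≤ i ≤ N } for every δ > 0, with a Lipschitz constant (with respect to the geodesic distance ρ) depending only on δ, ‖u‖_∞ and the data. -/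
open Set Filter Topology

namespace Paper

/-- Data of the junction problem (P): a junction with `N` edges of lengths `ℓ i`,
glued at the junction point `O` (parameter `0` of each edge), with a (possibly
degenerate) diffusion `a i`, Hamiltonians `H i`, a Kirchhoff nonlinearity `F`,
Dirichlet data `h i` and a constant `lam > 0`.  Functions on the junction `Γ`
are represented edge-wise: `u : Fin N → ℝ → ℝ`, where only the values of
`u i` on `[0, ℓ i]` are relevant and `u i 0` represents the value at `O`. -/
structure Data (N : ℕ) where
  ℓ : Fin N → ℝ
  ℓ_pos : ∀ i, 0 < ℓ i
  lam : ℝ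
  lam_pos : 0 < lam
  a : Fin N → ℝ → ℝ
  a_nonneg : ∀ i, ∀ t ∈ Set.Icc (0:ℝ) (ℓ i), 0 ≤ a i t
  a_cont : ∀ i, ContinuousOn (a i) (Set.Icc 0 (ℓ i))
  H : Fin N → ℝ → ℝ → ℝ
  H_cont : ∀ i, ContinuousOn (fun q : ℝ × ℝ => H i q.1 q.2)
      ((Set.Icc 0 (ℓ i)) ×ˢ (Set.univ : Set ℝ))
  F : ℝ → (Fin N → ℝ) → ℝ
  F_cont : Continuous (fun q : ℝ × (Fin N → ℝ) => F q.1 q.2)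
  h : Fin N → ℝ

variable {N : ℕ}

/-- A family of edge functions defines a function on `Γ`: values at `O` agree. -/
def Glued (u : Fin N → ℝ → ℝ) : Prop := ∀ i j : Fin N, u i 0 = u j 0

/-- `u ∈ USC(Γ)`. -/
def IsUSC (D : Data N) (u : Fin N → ℝ → ℝ) : Prop :=
  ∀ i, UpperSemicontinuousOn (u i) (Set.Icc 0 (D.ℓ i))

/-- `u ∈ LSC(Γ)`. -/
def IsLSC (D : Data N) (u : Fin N → ℝ → ℝ) : Prop :=
  ∀ i, LowerSemicontinuousOn (u i) (Set.Icc 0 (D.ℓ i))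

/-- Test functions in `C²(Γ)` (edge-wise C², glued at `O`). -/
def IsTest (φ : Fin N → ℝ → ℝ) : Prop :=
  Glued φ ∧ ∀ i, ContDiff ℝ 2 (φ i)

/-- `G_i(r,p,X,x) = λ r − a_i(x) X + H_i(x,p)`. -/
def G (D : Data N) (i : Fin N) (r p X t : ℝ) : ℝ :=
  D.lam * r - D.a i t * X + D.H i t p

/-- Local maximum point of an edge-wise function at an interior edge point. -/
def LocalMaxEdge (D : Data N) (w : Fin N → ℝ → ℝ) (i : Fin N) (t : ℝ) : Prop :=
  ∃ δ > 0, ∀ s ∈ Set.Icc (0:ℝ) (D.ℓ i), |s - t| < δ → w i s ≤ w i t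

def LocalMinEdge (D : Data N) (w : Fin N → ℝ → ℝ) (i : Fin N) (t : ℝ) : Prop :=
  ∃ δ > 0, ∀ s ∈ Set.Icc (0:ℝ) (D.ℓ i), |s - t| < δ → w i t ≤ w i s

/-- Local maximum point at the junction point `O`. -/
def LocalMaxO (D : Data N) (w : Fin N → ℝ → ℝ) : Prop :=
  ∃ δ > 0, ∀ j, ∀ s ∈ Set.Icc (0:ℝ) (D.ℓ j), s < δ → w j s ≤ w j 0

def LocalMinO (D : Data N) (w : Fin N → ℝ → ℝ) : Prop :=
  ∃ δ > 0, ∀ j, ∀ s ∈ Set.Icc (0:ℝ) (D.ℓ j), s < δ → w j 0 ≤ w j s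

/-- Local maximum point at the boundary vertex `v_i` (parameter `ℓ i`). -/
def LocalMaxVert (D : Data N) (w : Fin N → ℝ → ℝ) (i : Fin N) : Prop :=
  ∃ δ > 0, ∀ s ∈ Set.Icc (0:ℝ) (D.ℓ i), D.ℓ i - s < δ → w i s ≤ w i (D.ℓ i)

def LocalMinVert (D : Data N) (w : Fin N → ℝ → ℝ) (i : Fin N) : Prop :=
  ∃ δ > 0, ∀ s ∈ Set.Icc (0:ℝ) (D.ℓ i), D.ℓ i - s < δ → w i (D.ℓ i) ≤ w i s

/-- Viscosity subsolution of problem (P), junction viscosity sense. -/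
def IsSubsol (D : Data N) (u : Fin N → ℝ → ℝ) : Prop :=
  IsUSC D u ∧ Glued u ∧
  ∀ φ : Fin N → ℝ → ℝ, IsTest φ →
    ((∀ i, ∀ t ∈ Set.Ioo (0:ℝ) (D.ℓ i),
        LocalMaxEdge D (fun j s => u j s - φ j s) i t →
        G D i (u i t) (deriv (φ i) t) (deriv (deriv (φ i)) t) t ≤ 0) ∧
     (LocalMaxO D (fun j s => u j s - φ j s) →
        (∃ i, G D i (u i 0) (deriv (φ i) 0) (deriv (deriv (φ i)) 0) 0 ≤ 0) ∨
        (∀ i, D.F (u i 0) (fun j => deriv (φ j) 0) ≤ 0)) ∧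
     (∀ i, LocalMaxVert D (fun j s => u j s - φ j s) i →
        G D i (u i (D.ℓ i)) (deriv (φ i) (D.ℓ i)) (deriv (deriv (φ i)) (D.ℓ i)) (D.ℓ i) ≤ 0 ∨
        u i (D.ℓ i) ≤ D.h i))

/-- Viscosity supersolution of problem (P), junction viscosity sense. -/
def IsSupersol (D : Data N) (v : Fin N → ℝ → ℝ) : Prop :=
  IsLSC D v ∧ Glued v ∧
  ∀ φ : Fin N → ℝ → ℝ, IsTest φ →
    ((∀ i, ∀ t ∈ Set.Ioo (0:ℝ) (D.ℓ i),
        LocalMinEdge D (fun j s => v j s - φ j s) i t →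
        0 ≤ G D i (v i t) (deriv (φ i) t) (deriv (deriv (φ i)) t) t) ∧
     (LocalMinO D (fun j s => v j s - φ j s) →
        (∃ i, 0 ≤ G D i (v i 0) (deriv (φ i) 0) (deriv (deriv (φ i)) 0) 0) ∨
        (∀ i, 0 ≤ D.F (v i 0) (fun j => deriv (φ j) 0))) ∧
     (∀ i, LocalMinVert D (fun j s => v j s - φ j s) i →
        0 ≤ G D i (v i (D.ℓ i)) (deriv (φ i) (D.ℓ i)) (deriv (deriv (φ i)) (D.ℓ i)) (D.ℓ i) ∨
        D.h i ≤ v i (D.ℓ i)))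

/-- Assumption (Ham) for the Hamiltonian `H i`, with constant `C`. -/
def Ham (D : Data N) (C : ℝ) (i : Fin N) : Prop :=
  (∀ t ∈ Set.Icc (0:ℝ) (D.ℓ i), ∀ s ∈ Set.Icc (0:ℝ) (D.ℓ i), ∀ p : ℝ,
      |D.H i t p - D.H i s p| ≤ C * (1 + |p|) * |t - s|) ∧
  (∀ t ∈ Set.Icc (0:ℝ) (D.ℓ i), ∀ p q : ℝ, |D.H i t p - D.H i t q| ≤ C * |p - q|)

/-- Assumption (Hcoercive) for `H i` on the set `S`, with constant `C`. -/
def Coercive (D : Data N) (C : ℝ) (i : Fin N) (S : Set ℝ) : Prop :=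
  ∀ t ∈ S, ∀ p : ℝ, C⁻¹ * |p| - C ≤ D.H i t p

/-- Assumption (hyp-diff) for the diffusion `a i`. -/
def HypDiff (D : Data N) (i : Fin N) : Prop :=
  ∃ σ : ℝ → ℝ, (∃ C : NNReal, LipschitzOnWith C σ (Set.Icc 0 (D.ℓ i))) ∧
    ∀ t ∈ Set.Icc (0:ℝ) (D.ℓ i), D.a i t = (σ t) ^ 2

/-- Assumption (hyp-kirch) for the Kirchhoff nonlinearity `F`. -/
def Kirchhoff (D : Data N) : Prop :=
  (∀ (r s : ℝ) (p q : Fin N → ℝ), s ≤ r → (∀ i, p i ≤ q i) → D.F s q ≤ D.F r p) ∧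
  (∀ (r s : ℝ) (p q : Fin N → ℝ), s ≤ r → (∀ i, p i ≤ q i) → (∃ j, p j < q j) →
      D.F s q < D.F r p) ∧
  (∀ (i : Fin N) (r : ℝ) (p : Fin N → ℝ),
      Filter.Tendsto (fun z : ℝ => D.F r (Function.update p i z))
        Filter.atBot Filter.atTop)

/-- The steady assumptions (2.9). -/
def Steady (D : Data N) (C : ℝ) : Prop :=
  0 < C ∧ (∀ i, Ham D C i) ∧ (∀ i, HypDiff D i) ∧
  (∀ i, D.a i 0 = 0 → Coercive D C i (Set.Icc 0 (D.ℓ i))) ∧ Kirchhoff D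

/-- Assumption (hyp-dir). -/
def HypDir (D : Data N) (C : ℝ) : Prop :=
  ∀ i, 0 < D.a i (D.ℓ i) ∨
    ∃ δ > 0, Coercive D C i (Set.Icc (D.ℓ i - δ) (D.ℓ i))



section Aux
open Classical in

lemma exists_max_of_usc {f : ℝ → ℝ} {s : Set ℝ} (hs : IsCompact s) (hne : s.Nonempty)
    (hf : UpperSemicontinuousOn f s) : ∃ x ∈ s, ∀ y ∈ s, f y ≤ f x := by
  by_contra hcon
  push_neg at hcon
  have key : ∀ x : ℝ, x ∈ s → ∃ U : Set ℝ, IsOpen U ∧ x ∈ U ∧ ∃ y ∈ s, ∀ z ∈ U ∩ s, f z < f y := by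
    intro x hx
    obtain ⟨y, hy, hxy⟩ := hcon x hx
    have := hf x hx (f y) hxy
    rw [eventually_iff, mem_nhdsWithin] at this
    obtain ⟨U, hUo, hxU, hU⟩ := this
    exact ⟨U, hUo, hxU, y, hy, fun z hz => hU hz⟩
  choose U hUo hUx w hw hwlt using key
  have hU' : ∀ x ∈ s, (if hx : x ∈ s then U x hx else univ) ∈ 𝓝 x := by
    intro x hx
    rw [dif_pos hx]
    exact (hUo x hx).mem_nhds (hUx x hx)
  obtain ⟨t, hts, hcov⟩ := hs.elim_nhds_subcover _ hU'
  have htne : t.Nonempty := by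
    obtain ⟨z, hz⟩ := hne
    obtain ⟨x, hx, -⟩ := mem_iUnion₂.1 (hcov hz)
    exact ⟨x, hx⟩
  set W : ℝ → ℝ := fun x => if hx : x ∈ s then f (w x hx) else 0 with hW
  obtain ⟨x0, hx0t, hx0max⟩ := t.exists_max_image W htne
  have hx0s := hts x0 hx0t
  have hws : w x0 hx0s ∈ s := hw x0 hx0s
  obtain ⟨x1, hx1t, hmem⟩ := mem_iUnion₂.1 (hcov hws)
  have hx1s := hts x1 hx1t
  rw [dif_pos hx1s] at hmem
  have h1 : f (w x0 hx0s) < f (w x1 hx1s) := hwlt x1 hx1s _ ⟨hmem, hws⟩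
  have h2 : W x1 ≤ W x0 := hx0max x1 hx1t
  rw [hW] at h2
  simp only [dif_pos hx1s, dif_pos hx0s] at h2
  exact absurd (h1.trans_le h2) (lt_irrefl _)

noncomputable def Ea (c K z : ℝ) : ℝ := c * (1 - Real.exp (-(K * z)))
noncomputable def Ea' (c K z : ℝ) : ℝ := c * K * Real.exp (-(K * z))
noncomputable def gfun (ε z : ℝ) : ℝ := Real.sqrt (z^2 + ε^2) - ε
noncomputable def gfun' (ε z : ℝ) : ℝ := z / Real.sqrt (z^2 + ε^2)
noncomputable def gfun'' (ε z : ℝ) : ℝ := ε^2 / ((z^2 + ε^2) * Real.sqrt (z^2 + ε^2))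

lemma hasDerivAt_Ea (c K z : ℝ) : HasDerivAt (fun z => Ea c K z) (Ea' c K z) z := by
  have h1 : HasDerivAt (fun z : ℝ => -(K * z)) (-K) z := by
    exact (((hasDerivAt_id z).const_mul K).neg).congr_deriv (by ring)
  have h2 := h1.exp
  have h3 := (h2.const_sub 1).const_mul c
  refine h3.congr_deriv (Eq.symm ?_)
  simp [Ea']; ring
lemma hasDerivAt_Ea' (c K z : ℝ) : HasDerivAt (fun z => Ea' c K z) (-K * Ea' c K z) z := by
  have h1 : HasDerivAt (fun z : ℝ => -(K * z)) (-K) z := by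
    exact (((hasDerivAt_id z).const_mul K).neg).congr_deriv (by ring)
  have h2 := (h1.exp).const_mul (c * K)
  refine h2.congr_deriv (Eq.symm ?_)
  simp [Ea']; ring

lemma sq_add_sq_pos {ε z : ℝ} (hε : ε ≠ 0) : 0 < z^2 + ε^2 := by positivity
lemma sqrt_sq_add_sq_pos {ε z : ℝ} (hε : ε ≠ 0) : 0 < Real.sqrt (z^2 + ε^2) :=
  Real.sqrt_pos.2 (sq_add_sq_pos hε)

lemma hasDerivAt_gfun {ε : ℝ} (hε : ε ≠ 0) (z : ℝ) :
    HasDerivAt (fun z => gfun ε z) (gfun' ε z) z := by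
  have hq : HasDerivAt (fun z : ℝ => z^2 + ε^2) (2*z) z := by
    simpa using ((hasDerivAt_pow 2 z).add_const (ε^2))
  have h2 := (hq.sqrt (by positivity)).sub_const ε
  refine h2.congr_deriv (Eq.symm ?_)
  have h3 := (sqrt_sq_add_sq_pos (z := z) hε).ne'
  rw [gfun']; field_simp

lemma hasDerivAt_gfun' {ε : ℝ} (hε : ε ≠ 0) (z : ℝ) :
    HasDerivAt (fun z => gfun' ε z) (gfun'' ε z) z := by
  have hq : HasDerivAt (fun z : ℝ => z^2 + ε^2) (2*z) z := by
    simpa using ((hasDerivAt_pow 2 z).add_const (ε^2))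
  have hs : HasDerivAt (fun z : ℝ => Real.sqrt (z^2 + ε^2)) (2*z / (2 * Real.sqrt (z^2+ε^2))) z :=
    hq.sqrt (by positivity)
  have h3 := (sqrt_sq_add_sq_pos (z := z) hε).ne'
  have hd := (hasDerivAt_id z).div hs h3
  refine hd.congr_deriv (Eq.symm ?_)
  have hsq : Real.sqrt (z^2+ε^2) ^ 2 = z^2 + ε^2 := Real.sq_sqrt (by positivity)
  have hms : Real.sqrt (z^2+ε^2) * Real.sqrt (z^2+ε^2) = z^2 + ε^2 :=
    Real.mul_self_sqrt (by positivity)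
  rw [hsq]
  have hnum : 1 * Real.sqrt (z^2+ε^2) - id z * (2*z/(2*Real.sqrt (z^2+ε^2)))
      = ε^2 / Real.sqrt (z^2+ε^2) := by
    simp only [id]
    field_simp
    linear_combination hsq
  rw [hnum, gfun'', div_div, mul_comm]

lemma Ea_zero (c K : ℝ) : Ea c K 0 = 0 := by simp [Ea]
lemma Ea'_pos {c K : ℝ} (hc : 0 < c) (hK : 0 < K) (z : ℝ) : 0 < Ea' c K z := by
  simp only [Ea']; exact mul_pos (mul_pos hc hK) (Real.exp_pos _)
lemma Ea_mono {c K z1 z2 : ℝ} (hc : 0 ≤ c) (hK : 0 ≤ K) (h : z1 ≤ z2) :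
    Ea c K z1 ≤ Ea c K z2 := by
  have : Real.exp (-(K*z2)) ≤ Real.exp (-(K*z1)) := by
    apply Real.exp_le_exp.2; nlinarith
  simp only [Ea]; nlinarith
lemma Ea_nonneg {c K z : ℝ} (hc : 0 ≤ c) (hK : 0 ≤ K) (hz : 0 ≤ z) : 0 ≤ Ea c K z := by
  have := Ea_mono (z1 := 0) (z2 := z) hc hK hz; rwa [Ea_zero] at this
lemma Ea_le_linear {c K z : ℝ} (hc : 0 ≤ c) (hz : 0 ≤ z) : Ea c K z ≤ c * K * z := by
  have h := Real.add_one_le_exp (-(K*z))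
  simp only [Ea]; nlinarith
lemma Ea'_lower {c K z Rb : ℝ} (hc : 0 ≤ c) (hK : 0 ≤ K) (h : z ≤ Rb) :
    c * K * Real.exp (-(K*Rb)) ≤ Ea' c K z := by
  have : Real.exp (-(K*Rb)) ≤ Real.exp (-(K*z)) := by
    apply Real.exp_le_exp.2; nlinarith
  simp only [Ea']
  exact mul_le_mul_of_nonneg_left this (mul_nonneg hc hK)
lemma Ea'_upper {c K z : ℝ} (hc : 0 ≤ c) (hK : 0 ≤ K) (hz : 0 ≤ z) : Ea' c K z ≤ c * K := by
  have h1 : Real.exp (-(K*z)) ≤ 1 := Real.exp_le_one_iff.2 (by nlinarith)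
  simp only [Ea']
  calc c * K * Real.exp (-(K*z)) ≤ c * K * 1 := mul_le_mul_of_nonneg_left h1 (mul_nonneg hc hK)
    _ = c * K := mul_one _

lemma gfun_nonneg {ε : ℝ} (hε : 0 ≤ ε) (z : ℝ) : 0 ≤ gfun ε z := by
  have : Real.sqrt (ε^2) ≤ Real.sqrt (z^2 + ε^2) := Real.sqrt_le_sqrt (by nlinarith)
  rw [Real.sqrt_sq hε] at this
  simp [gfun]; linarith
lemma gfun_le_abs {ε : ℝ} (hε : 0 ≤ ε) (z : ℝ) : gfun ε z ≤ |z| := by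
  have h1 : Real.sqrt (z^2 + ε^2) ≤ |z| + ε := by
    rw [show |z| + ε = Real.sqrt ((|z|+ε)^2) from (Real.sqrt_sq (by positivity)).symm]
    apply Real.sqrt_le_sqrt
    nlinarith [sq_abs z, abs_nonneg z]
  simp [gfun]; linarith
lemma gfun_even (ε z : ℝ) : gfun ε (-z) = gfun ε z := by simp [gfun]
lemma gfun'_even_neg (ε z : ℝ) : gfun' ε (-z) = - gfun' ε z := by simp [gfun', neg_div]
lemma abs_gfun'_le_one {ε : ℝ} (hε : ε ≠ 0) (z : ℝ) : |gfun' ε z| ≤ 1 := by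
  rw [gfun', abs_div, abs_of_pos (sqrt_sq_add_sq_pos hε), div_le_one (sqrt_sq_add_sq_pos hε)]
  have : |z| = Real.sqrt (z^2) := (Real.sqrt_sq_eq_abs z).symm
  rw [this]
  exact Real.sqrt_le_sqrt (by nlinarith)
lemma gfun_lb {ε z r : ℝ} (hε : 0 ≤ ε) (hr : 0 ≤ r) (h : r ≤ |z|) : r - ε ≤ gfun ε z := by
  have : Real.sqrt (z^2) ≤ Real.sqrt (z^2 + ε^2) := Real.sqrt_le_sqrt (by nlinarith)
  rw [Real.sqrt_sq_eq_abs] at this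
  simp [gfun]; linarith
lemma abs_gfun'_lb {ε z r : ℝ} (hε : 0 < ε) (hεr : ε ≤ r) (h : r ≤ |z|) (hr : 0 < r) :
    1/2 ≤ |gfun' ε z| := by
  have hz : 0 < |z| := lt_of_lt_of_le hr h
  have hεz : ε ≤ |z| := hεr.trans h
  have h1 : Real.sqrt (z^2 + ε^2) ≤ 2 * |z| := by
    rw [show 2*|z| = Real.sqrt ((2*|z|)^2) from (Real.sqrt_sq (by positivity)).symm]
    apply Real.sqrt_le_sqrt
    have : z^2 = |z|^2 := (sq_abs z).symm
    nlinarith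
  rw [gfun', abs_div, abs_of_pos (sqrt_sq_add_sq_pos hε.ne')]
  rw [le_div_iff₀ (sqrt_sq_add_sq_pos hε.ne')]
  linarith
lemma gfun''_nonneg {ε : ℝ} (hε : ε ≠ 0) (z : ℝ) : 0 ≤ gfun'' ε z := by
  have := sqrt_sq_add_sq_pos (z := z) hε
  have := sq_add_sq_pos (z := z) hε
  rw [gfun'']; positivity
lemma gfun''_ub {ε z r : ℝ} (hε : 0 < ε) (h : r ≤ |z|) (hr : 0 < r) :
    gfun'' ε z ≤ ε^2 / (r^2 * r) := by
  have h1 : r^2 ≤ z^2 + ε^2 := by nlinarith [sq_abs z]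
  have h2 : r ≤ Real.sqrt (z^2 + ε^2) := by
    rw [show r = Real.sqrt (r^2) from (Real.sqrt_sq hr.le).symm]
    exact Real.sqrt_le_sqrt h1
  rw [gfun'']
  apply div_le_div_of_nonneg_left (by positivity) (by positivity)
  have := sqrt_sq_add_sq_pos (z := z) hε.ne'
  nlinarith

noncomputable def P1 (c K ε t' s : ℝ) : ℝ := Ea' c K (gfun ε (s - t')) * gfun' ε (s - t')
noncomputable def P1' (c K ε t' s : ℝ) : ℝ :=
  -K * Ea' c K (gfun ε (s-t')) * (gfun' ε (s-t'))^2 + Ea' c K (gfun ε (s-t')) * gfun'' ε (s-t')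

lemma hasDerivAt_phi1 (A c K ε t' : ℝ) (hε : ε ≠ 0) (s : ℝ) :
    HasDerivAt (fun s => A + Ea c K (gfun ε (s - t'))) (P1 c K ε t' s) s := by
  have h1 : HasDerivAt (fun s : ℝ => s - t') 1 s := (hasDerivAt_id s).sub_const t'
  have h2 := (hasDerivAt_gfun hε (s - t')).comp s h1
  have h3 := (hasDerivAt_Ea c K (gfun ε (s - t'))).comp s h2
  have h4 := h3.const_add A
  refine h4.congr_deriv (Eq.symm ?_)
  simp [P1, Function.comp]

lemma hasDerivAt_P1 (c K ε t' : ℝ) (hε : ε ≠ 0) (s : ℝ) :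
    HasDerivAt (P1 c K ε t') (P1' c K ε t' s) s := by
  have h1 : HasDerivAt (fun s : ℝ => s - t') 1 s := (hasDerivAt_id s).sub_const t'
  have h2 := ((hasDerivAt_Ea' c K (gfun ε (s - t'))).comp s
    ((hasDerivAt_gfun hε (s - t')).comp s h1)).mul ((hasDerivAt_gfun' hε (s - t')).comp s h1)
  refine h2.congr_deriv (Eq.symm ?_)
  simp [P1', Function.comp]; ring

lemma hasDerivAt_phi2 (A c K : ℝ) (s : ℝ) :
    HasDerivAt (fun s => A + Ea c K s) (Ea' c K s) s := (hasDerivAt_Ea c K s).const_add A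

lemma contDiff_Ea (c K : ℝ) : ContDiff ℝ 2 (fun y : ℝ => Ea c K y) := by
  unfold Ea; fun_prop

lemma contDiff_phi1 (A c K ε t' : ℝ) (hε : ε ≠ 0) :
    ContDiff ℝ 2 (fun s => A + Ea c K (gfun ε (s - t'))) := by
  have hginner : ContDiff ℝ 2 (fun s : ℝ => (s - t')^2 + ε^2) := by fun_prop
  have hg : ContDiff ℝ 2 (fun s : ℝ => gfun ε (s - t')) := by
    unfold gfun
    apply ContDiff.sub _ contDiff_const
    rw [contDiff_iff_contDiffAt]
    intro s
    exact (Real.contDiffAt_sqrt (by positivity)).comp s hginner.contDiffAt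
  exact contDiff_const.add ((contDiff_Ea c K).comp hg)

lemma contDiff_phi2 (A c K : ℝ) : ContDiff ℝ 2 (fun s : ℝ => A + Ea c K s) :=
  contDiff_const.add (contDiff_Ea c K)

lemma fin_bound {N : ℕ} (hN : 0 < N) (f : Fin N → ℝ) : ∃ B, 0 ≤ B ∧ ∀ i, f i ≤ B := by
  have hne : (Finset.univ : Finset (Fin N)).Nonempty := ⟨⟨0,hN⟩, Finset.mem_univ _⟩
  refine ⟨max 0 (Finset.univ.sup' hne f), le_max_left _ _, fun i => ?_⟩
  exact le_max_of_le_right (Finset.le_sup' f (Finset.mem_univ i))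

lemma slope_choice {D0 K R c : ℝ} (hK : 0 < K) (h : D0 * Real.exp (K*R) / K ≤ c) :
    D0 ≤ c * K * Real.exp (-(K*R)) := by
  rw [div_le_iff₀ hK] at h
  have hE := Real.exp_pos (K*R)
  rw [Real.exp_neg, ← div_eq_mul_inv, le_div_iff₀ hE]
  exact h

lemma Ea_choice {c K z M e : ℝ} (he : e = 1 - Real.exp (-(K*z))) (hepos : 0 < e)
    (h : M / e ≤ c) : M ≤ Ea c K z := by
  rw [div_le_iff₀ hepos] at h
  rw [Ea, ← he]
  nlinarith

lemma P2_est {c2 K D0 R : ℝ} (hc2 : 0 < c2) (hK : 0 < K)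
    (hm2 : D0 + 1 ≤ c2 * K * Real.exp (-(K*R))) {s : ℝ} (hsR : s ≤ R) :
    D0 ≤ |Ea' c2 K s| ∧ (-K * Ea' c2 K s) ≤ -(K/8) * |Ea' c2 K s| := by
  have hpos : 0 < Ea' c2 K s := Ea'_pos hc2 hK s
  have habs : |Ea' c2 K s| = Ea' c2 K s := abs_of_pos hpos
  have hlow : c2 * K * Real.exp (-(K*R)) ≤ Ea' c2 K s := Ea'_lower hc2.le hK.le hsR
  constructor
  · rw [habs]; linarith
  · rw [habs]; nlinarith

lemma P1_est {c1 K D0 Bb R ε r0 : ℝ} (hc1 : 0 < c1) (hK : 0 < K) (hε : 0 < ε)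
    (hεr0 : ε ≤ r0) (hr0 : 0 < r0) (hεg : ε^2/(r0^2*r0) ≤ K/8)
    (hm1 : 2*D0 + 2*Bb + 2 ≤ c1 * K * Real.exp (-(K*R)))
    (hD0 : 0 < D0) (hBb : 0 ≤ Bb)
    {z : ℝ} (hzR : |z| ≤ R) (hr : r0 ≤ |z|) :
    D0 ≤ |Ea' c1 K (gfun ε z) * gfun' ε z| ∧
    Bb ≤ |Ea' c1 K (gfun ε z) * gfun' ε z| ∧
    (-K * Ea' c1 K (gfun ε z) * (gfun' ε z)^2 + Ea' c1 K (gfun ε z) * gfun'' ε z)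
      ≤ -(K/8) * |Ea' c1 K (gfun ε z) * gfun' ε z| := by
  have hgR : gfun ε z ≤ R := (gfun_le_abs hε.le _).trans hzR
  have hE : 0 < Ea' c1 K (gfun ε z) := Ea'_pos hc1 hK _
  have hElow : c1 * K * Real.exp (-(K*R)) ≤ Ea' c1 K (gfun ε z) := Ea'_lower hc1.le hK.le hgR
  have hg'lb : 1/2 ≤ |gfun' ε z| := abs_gfun'_lb hε hεr0 hr hr0
  have hg'ub : |gfun' ε z| ≤ 1 := abs_gfun'_le_one hε.ne' _
  have habs : |Ea' c1 K (gfun ε z) * gfun' ε z| = Ea' c1 K (gfun ε z) * |gfun' ε z| := by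
    rw [abs_mul, abs_of_pos hE]
  have hm1' : 2*D0 + 2*Bb + 2 ≤ Ea' c1 K (gfun ε z) := le_trans hm1 hElow
  have hPlb : D0 + Bb + 1 ≤ |Ea' c1 K (gfun ε z) * gfun' ε z| := by
    rw [habs]; nlinarith
  have hg''ub : gfun'' ε z ≤ K/8 := (gfun''_ub hε hr hr0).trans hεg
  have hg''0 : 0 ≤ gfun'' ε z := gfun''_nonneg hε.ne' _
  refine ⟨by linarith, by linarith, ?_⟩
  rw [habs]
  have ha2 : 1/4 ≤ (gfun' ε z)^2 := by nlinarith [sq_abs (gfun' ε z)]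
  have hf1 : 0 ≤ K * (Ea' c1 K (gfun ε z) * ((gfun' ε z)^2 - 1/4)) :=
    mul_nonneg hK.le (mul_nonneg hE.le (by linarith))
  have hf2 : 0 ≤ Ea' c1 K (gfun ε z) * (K/8 - gfun'' ε z) := mul_nonneg hE.le (by linarith)
  have hf3 : 0 ≤ (K/8) * (Ea' c1 K (gfun ε z) * (1 - |gfun' ε z|)) :=
    mul_nonneg (by positivity) (mul_nonneg hE.le (by linarith))
  nlinarith [hf1, hf2, hf3]

end Aux

set_option maxHeartbeats 1600000 in
/-- Proposition 5.2, Lipschitz regularity of subsolutions.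
Under the steady assumptions, if on each edge either `H i` is coercive or
`a i` is uniformly elliptic, every bounded viscosity subsolution of (P) is
Lipschitz (for the geodesic distance) on `Γ^δ`, with a constant depending only
on `δ`, the sup-norm bound and the data. -/
theorem lipschitz_subsolutions (N : ℕ) (D : Data N) (C : ℝ)
    (hSteady : Steady D C)
    (hextra : ∀ i, Coercive D C i (Set.Icc 0 (D.ℓ i)) ∨
      ∃ al > 0, ∀ t ∈ Set.Icc (0:ℝ) (D.ℓ i), al ≤ D.a i t) :
    ∀ δ > 0, ∀ M : ℝ, 0 ≤ M → ∃ L > 0,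
      ∀ u : Fin N → ℝ → ℝ, IsSubsol D u →
        (∀ i, ∀ t ∈ Set.Icc (0:ℝ) (D.ℓ i), |u i t| ≤ M) →
        ∀ j, ∀ t ∈ Set.Icc (0:ℝ) (D.ℓ j),
          (∀ i, δ < (if i = j then D.ℓ j - t else t + D.ℓ i)) →
        ∀ j', ∀ t' ∈ Set.Icc (0:ℝ) (D.ℓ j'),
          (∀ i, δ < (if i = j' then D.ℓ j' - t' else t' + D.ℓ i)) →
        |u j t - u j' t'| ≤ L * (if j = j' then |t - t'| else t + t') := by
  intro δ hδ M hM
  rcases Nat.eq_zero_or_pos N with hN | hN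
  · exact ⟨1, one_pos, fun u _ _ j => absurd j.isLt (by omega)⟩
  obtain ⟨hC, hHam, hdiff, hcoerD, hKir⟩ := hSteady
  have hlam := D.lam_pos
  -- bound on edge lengths
  obtain ⟨R, hR0, hR⟩ := fin_bound hN (fun i => D.ℓ i)
  -- bound on |H i t 0|
  have hH0ex : ∀ i : Fin N, ∃ B, ∀ t ∈ Icc (0:ℝ) (D.ℓ i), |D.H i t 0| ≤ B := by
    intro i
    have hcont : ContinuousOn (fun t => D.H i t 0) (Icc 0 (D.ℓ i)) := by
      have h1 := D.H_cont i
      have h2 : ContinuousOn (fun t : ℝ => ((t, (0:ℝ)) : ℝ × ℝ)) (Icc 0 (D.ℓ i)) := by fun_prop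
      exact h1.comp h2 (fun t ht => ⟨ht, mem_univ _⟩)
    obtain ⟨B, hB⟩ := (isCompact_Icc).exists_bound_of_continuousOn hcont
    exact ⟨B, fun t ht => by simpa [Real.norm_eq_abs] using hB t ht⟩
  choose HB hHB using hH0ex
  obtain ⟨H0, hH00, hH0b⟩ := fin_bound hN HB
  have hH0' : ∀ i, ∀ t ∈ Icc (0:ℝ) (D.ℓ i), |D.H i t 0| ≤ H0 :=
    fun i t ht => (hHB i t ht).trans (hH0b i)
  -- the constant K
  have hKex : ∀ i : Fin N, ∃ k, 1 ≤ k ∧ (Coercive D C i (Icc 0 (D.ℓ i)) ∨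
      ∃ al > 0, (∀ t ∈ Icc (0:ℝ) (D.ℓ i), al ≤ D.a i t) ∧ 8*(C+1) ≤ al * k) := by
    intro i
    rcases hextra i with hc | ⟨al, hal, halb⟩
    · exact ⟨1, le_refl 1, Or.inl hc⟩
    · refine ⟨max 1 (8*(C+1)/al), le_max_left _ _, Or.inr ⟨al, hal, halb, ?_⟩⟩
      calc 8*(C+1) = al * (8*(C+1)/al) := by field_simp
        _ ≤ al * max 1 (8*(C+1)/al) := mul_le_mul_of_nonneg_left (le_max_right _ _) hal.le
  choose kf hk1 hkP using hKex
  obtain ⟨K, hK0, hkK⟩ := fin_bound hN kf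
  have hK1 : 1 ≤ K := (hk1 ⟨0,hN⟩).trans (hkK ⟨0,hN⟩)
  have hKpos : 0 < K := lt_of_lt_of_le one_pos hK1
  have hKedge : ∀ i, Coercive D C i (Icc 0 (D.ℓ i)) ∨
      ∃ al > 0, (∀ t ∈ Icc (0:ℝ) (D.ℓ i), al ≤ D.a i t) ∧ 8*(C+1) ≤ al * K := by
    intro i; rcases hkP i with hc | ⟨al, hal, halb, halk⟩
    · exact Or.inl hc
    · exact Or.inr ⟨al, hal, halb, halk.trans (mul_le_mul_of_nonneg_left (hkK i) hal.le)⟩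
  -- slope threshold
  set D0 : ℝ := C*(D.lam*M + C + 1) + D.lam*M + H0 + 1 with hD0def
  have hlamM : 0 ≤ D.lam * M := mul_nonneg hlam.le hM
  have hD0a : C*(D.lam*M + C + 1) ≤ D0 := by rw [hD0def]; nlinarith
  have hD0b : D.lam*M + H0 + 1 ≤ D0 := by rw [hD0def]; nlinarith
  have hD0pos : 0 < D0 := by rw [hD0def]; nlinarith
  -- the edge positivity lemma
  have edge : ∀ i, ∀ t ∈ Icc (0:ℝ) (D.ℓ i), ∀ r p X, -M ≤ r → D0 ≤ |p| → X ≤ -(K/8)*|p| →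
      0 < G D i r p X t := by
    intro i t ht r p X hr hp hX
    have habs : 0 ≤ |p| := abs_nonneg p
    have hXneg : X ≤ 0 := hX.trans (by nlinarith)
    have hlamr : D.lam * (-M) ≤ D.lam * r := mul_le_mul_of_nonneg_left hr hlam.le
    rcases hKedge i with hc | ⟨al, hal, halb, halk⟩
    · have h1 : C⁻¹ * |p| - C ≤ D.H i t p := hc t ht p
      have h2 : 0 ≤ -(D.a i t * X) := by nlinarith [D.a_nonneg i t ht]
      have h3 : D.lam*M + C + 1 ≤ C⁻¹ * |p| := by
        have h4 : C⁻¹ * (C*(D.lam*M + C + 1)) ≤ C⁻¹ * |p| :=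
          mul_le_mul_of_nonneg_left (hD0a.trans hp) (inv_nonneg.2 hC.le)
        rwa [← mul_assoc, inv_mul_cancel₀ hC.ne', one_mul] at h4
      simp only [G]; linarith
    · have hHp : D.H i t 0 - C * |p| ≤ D.H i t p := by
        have h5 := (hHam i).2 t ht p 0
        rw [sub_zero] at h5
        have h6 := (abs_le.1 h5).1
        linarith
      have hH0i : -H0 ≤ D.H i t 0 := (abs_le.1 (hH0' i t ht)).1
      have hapos : al ≤ D.a i t := halb t ht
      have h2 : al * ((K/8)*|p|) ≤ -(D.a i t * X) := by
        have h4 : (K/8)*|p| ≤ -X := by linarith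
        have h7 : 0 ≤ (K/8)*|p| := by positivity
        nlinarith
      have h5 : (C+1) * |p| ≤ al * ((K/8)*|p|) := by
        nlinarith [mul_le_mul_of_nonneg_right halk habs]
      simp only [G]; linarith
  -- bound on Dirichlet data
  obtain ⟨hb, hb0, hhb⟩ := fin_bound hN D.h
  -- the constant c2
  set e2 : ℝ := 1 - Real.exp (-(K*(δ/2))) with he2
  have he2pos : 0 < e2 := by
    have h1 : Real.exp (-(K*(δ/2))) < 1 := Real.exp_lt_one_iff.2 (by nlinarith)
    rw [he2]; linarith
  set c2 : ℝ := max ((D0+1) * Real.exp (K*R) / K) ((M + hb + 1)/e2) + 1 with hc2def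
  have hc2pos : 0 < c2 := by
    have h1 : (0:ℝ) ≤ (D0+1) * Real.exp (K*R) / K := by positivity
    have h2 := le_max_left ((D0+1) * Real.exp (K*R) / K) ((M + hb + 1)/e2)
    rw [hc2def]; linarith
  have hm2 : D0 + 1 ≤ c2 * K * Real.exp (-(K*R)) := by
    apply slope_choice hKpos
    have h2 := le_max_left ((D0+1) * Real.exp (K*R) / K) ((M + hb + 1)/e2)
    rw [hc2def]; linarith
  have hc2E : M + hb + 1 ≤ Ea c2 K (δ/2) := by
    apply Ea_choice he2 he2pos
    have h2 := le_max_right ((D0+1) * Real.exp (K*R) / K) ((M + hb + 1)/e2)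
    rw [hc2def]; linarith
  -- Kirchhoff bound
  have hKirB : ∀ i : Fin N, ∃ b, ∀ z ≤ b, 1 ≤ D.F (-M) (Function.update (fun _ => c2*K) i z) := by
    intro i
    have h1 := hKir.2.2 i (-M) (fun _ => c2*K)
    have h2 := h1.eventually_ge_atTop 1
    rw [eventually_atBot] at h2
    exact h2
  choose bb hbb using hKirB
  obtain ⟨Bb, hBb0, hBbb⟩ := fin_bound hN (fun i => -(bb i))
  have hBb : ∀ i : Fin N, ∀ z ≤ -Bb, 1 ≤ D.F (-M) (Function.update (fun _ => c2*K) i z) := by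
    intro i z hz
    exact hbb i z (hz.trans (by have := hBbb i; linarith))
  -- the constant c1
  set e4 : ℝ := 1 - Real.exp (-(K*(δ/4))) with he4
  have he4pos : 0 < e4 := by
    have h1 : Real.exp (-(K*(δ/4))) < 1 := Real.exp_lt_one_iff.2 (by nlinarith)
    rw [he4]; linarith
  set c1 : ℝ := max ((2*D0 + 2*Bb + 2) * Real.exp (K*R) / K) ((M + hb + 1)/e4) + 1 with hc1def
  have hc1pos : 0 < c1 := by
    have h1 : (0:ℝ) ≤ (2*D0 + 2*Bb + 2) * Real.exp (K*R) / K := by positivity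
    have h2 := le_max_left ((2*D0 + 2*Bb + 2) * Real.exp (K*R) / K) ((M + hb + 1)/e4)
    rw [hc1def]; linarith
  have hm1 : 2*D0 + 2*Bb + 2 ≤ c1 * K * Real.exp (-(K*R)) := by
    apply slope_choice hKpos
    have h2 := le_max_left ((2*D0 + 2*Bb + 2) * Real.exp (K*R) / K) ((M + hb + 1)/e4)
    rw [hc1def]; linarith
  have hc1E : M + hb + 1 ≤ Ea c1 K (δ/4) := by
    apply Ea_choice he4 he4pos
    have h2 := le_max_right ((2*D0 + 2*Bb + 2) * Real.exp (K*R) / K) ((M + hb + 1)/e4)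
    rw [hc1def]; linarith
  -- the Lipschitz constant
  refine ⟨(max c1 c2) * K + 1, by nlinarith [le_max_left c1 c2], ?_⟩
  intro u hu hubnd j t ht hΓj j' t' ht' hΓj'
  obtain ⟨huUSC, hglu, huG⟩ := hu
  have hubm : ∀ i, ∀ s ∈ Icc (0:ℝ) (D.ℓ i), -M ≤ u i s := fun i s hs => (abs_le.1 (hubnd i s hs)).1
  have claim : ∀ (b : Fin N) (tb : ℝ), tb ∈ Icc 0 (D.ℓ b) →
      (∀ i, δ < (if i = b then D.ℓ b - tb else tb + D.ℓ i)) →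
      ∀ i, ∀ s ∈ Icc (0:ℝ) (D.ℓ i),
        u i s - u b tb ≤ if i = b then Ea c1 K |s - tb| else Ea c1 K tb + Ea c2 K s := by
    intro b tb htb hΓ
    by_contra hcon
    push_neg at hcon
    obtain ⟨i0, s0, hs0, hviol⟩ := hcon
    set θ0 := u i0 s0 - u b tb - (if i0 = b then Ea c1 K |s0 - tb| else Ea c1 K tb + Ea c2 K s0)
      with hθ0def
    have hθ0 : 0 < θ0 := by rw [hθ0def]; linarith
    have htb0 : 0 ≤ tb := htb.1
    have htbR : tb ≤ D.ℓ b := htb.2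
    -- upper semicontinuity radius at tb
    have husc := huUSC b tb htb (u b tb + θ0/2) (by linarith)
    rw [Filter.Eventually, Metric.mem_nhdsWithin_iff] at husc
    obtain ⟨r1, hr1, hball⟩ := husc
    set r0 : ℝ := min r1 (δ/4) with hr0def
    have hr0pos : 0 < r0 := lt_min hr1 (by linarith)
    have hr0δ : r0 ≤ δ/4 := min_le_right _ _
    have huscr : ∀ sA ∈ Icc (0:ℝ) (D.ℓ b), |sA - tb| < r0 → u b sA < u b tb + θ0/2 := by
      intro sA hsA hlt
      have h1 : sA ∈ Metric.ball tb r1 ∩ Icc 0 (D.ℓ b) := by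
        refine ⟨?_, hsA⟩
        rw [Metric.mem_ball, Real.dist_eq]
        exact hlt.trans_le (min_le_left _ _)
      exact hball h1
    -- the smoothing parameter
    set ε : ℝ := min r0 (r0 * Real.sqrt (K * r0 / 8)) with hεdef
    have hεpos : 0 < ε := lt_min hr0pos (by positivity)
    have hεr0 : ε ≤ r0 := min_le_left _ _
    have hεδ : ε ≤ δ/4 := hεr0.trans hr0δ
    have hεg : ε^2 / (r0^2 * r0) ≤ K/8 := by
      have h1 : ε ≤ r0 * Real.sqrt (K * r0 / 8) := min_le_right _ _
      have h3 := Real.sq_sqrt (show (0:ℝ) ≤ K * r0 / 8 by positivity)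
      have h2 : ε^2 ≤ r0^2 * (K * r0 / 8) := by
        nlinarith [hεpos.le, mul_nonneg hr0pos.le (Real.sqrt_nonneg (K * r0 / 8))]
      rw [div_le_iff₀ (by positivity)]
      nlinarith
    -- the test function
    set A2 : ℝ := u b tb + Ea c1 K (gfun ε tb) with hA2def
    set φ : Fin N → ℝ → ℝ := fun i => if i = b then
        (fun s => u b tb + Ea c1 K (gfun ε (s - tb))) else (fun s => A2 + Ea c2 K s) with hφdef
    have hφb : φ b = fun s => u b tb + Ea c1 K (gfun ε (s - tb)) := by rw [hφdef]; simp
    have hφo : ∀ i, i ≠ b → φ i = fun s => A2 + Ea c2 K s := by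
      intro i hi; rw [hφdef]; simp [hi]
    have hglue : ∀ i, φ i 0 = A2 := by
      intro i
      by_cases hi : i = b
      · subst hi; rw [hφb]; simp only [hA2def]
        rw [show (0:ℝ) - tb = -tb by ring, gfun_even]
      · rw [hφo i hi]; simp [Ea_zero]
    have hTest : IsTest φ := by
      constructor
      · intro i j; rw [hglue i, hglue j]
      · intro i
        by_cases hi : i = b
        · subst hi; rw [hφb]; exact contDiff_phi1 _ c1 K ε tb hεpos.ne'
        · rw [hφo i hi]; exact contDiff_phi2 _ c2 K
    -- derivatives of the test function
    have hdφb : deriv (φ b) = P1 c1 K ε tb := by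
      rw [hφb]; funext s; exact (hasDerivAt_phi1 _ c1 K ε tb hεpos.ne' s).deriv
    have hddφb : ∀ s, deriv (deriv (φ b)) s = P1' c1 K ε tb s := by
      intro s; rw [hdφb]; exact (hasDerivAt_P1 c1 K ε tb hεpos.ne' s).deriv
    have hdφo : ∀ i, i ≠ b → deriv (φ i) = fun s => Ea' c2 K s := by
      intro i hi; rw [hφo i hi]; funext s; exact (hasDerivAt_phi2 _ c2 K s).deriv
    have hddφo : ∀ (i : Fin N), i ≠ b → ∀ s, deriv (deriv (φ i)) s = -K * Ea' c2 K s := by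
      intro i hi s; rw [hdφo i hi]; exact (hasDerivAt_Ea' c2 K s).deriv
    -- the function u - φ and its maximum
    set w : Fin N → ℝ → ℝ := fun i s => u i s - φ i s with hwdef
    have hwmax : ∀ i : Fin N, ∃ x ∈ Icc (0:ℝ) (D.ℓ i), ∀ y ∈ Icc (0:ℝ) (D.ℓ i), w i y ≤ w i x := by
      intro i
      apply exists_max_of_usc isCompact_Icc (nonempty_Icc.2 (D.ℓ_pos i).le)
      have h1 : UpperSemicontinuousOn (u i) (Icc 0 (D.ℓ i)) := huUSC i
      have h2 : UpperSemicontinuousOn (fun s => -φ i s) (Icc 0 (D.ℓ i)) :=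
        (((hTest.2 i).continuous.neg).continuousOn).upperSemicontinuousOn
      have h3 := h1.add h2
      have h4 : w i = fun z => u i z + -φ i z := by
        funext z; rw [hwdef]; ring
      rw [h4]
      exact h3
    choose xm hxm hxmax using hwmax
    have hFinNe : (Finset.univ : Finset (Fin N)).Nonempty := ⟨b, Finset.mem_univ b⟩
    obtain ⟨iS, hiSmem, hiSmax⟩ := Finset.exists_max_image Finset.univ (fun i => w i (xm i)) hFinNe
    set sS := xm iS with hsSdef
    set θε := w iS sS with hθεdef
    have hglobal : ∀ i, ∀ s ∈ Icc (0:ℝ) (D.ℓ i), w i s ≤ θε :=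
      fun i s hs => (hxmax i s hs).trans (hiSmax i (Finset.mem_univ i))
    have hsS : sS ∈ Icc (0:ℝ) (D.ℓ iS) := hxm iS
    -- θε ≥ θ0 > 0
    have hθεθ0 : θ0 ≤ θε := by
      have h1 : φ i0 s0 ≤ u b tb + (if i0 = b then Ea c1 K |s0 - tb| else Ea c1 K tb + Ea c2 K s0) := by
        by_cases hi : i0 = b
        · subst hi; rw [hφb, if_pos rfl]
          have h2 := Ea_mono hc1pos.le hKpos.le (gfun_le_abs hεpos.le (s0 - tb))
          simp only
          linarith
        · rw [hφo i0 hi, if_neg hi]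
          simp only [hA2def]
          have hg : gfun ε tb ≤ tb := (gfun_le_abs hεpos.le tb).trans_eq (abs_of_nonneg htb0)
          have h2 := Ea_mono hc1pos.le hKpos.le hg
          linarith
      have h2 := hglobal i0 s0 hs0
      rw [hwdef] at h2
      simp only at h2
      rw [hθ0def]
      linarith
    have hθεpos : 0 < θε := lt_of_lt_of_le hθ0 hθεθ0
    -- the USC trap near tb
    have htrap : ∀ sA ∈ Icc (0:ℝ) (D.ℓ b), |sA - tb| < r0 → w b sA = θε → False := by
      intro sA hsA hlt heq
      have h1 := huscr sA hsA hlt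
      have h2 : u b tb ≤ φ b sA := by
        rw [hφb]
        have h3 := Ea_nonneg hc1pos.le hKpos.le (gfun_nonneg hεpos.le (sA - tb))
        simp only
        linarith
      rw [hwdef] at heq; simp only at heq
      linarith
    -- viscosity subsolution clauses
    obtain ⟨hintC, hOC, hVC⟩ := huG φ hTest
    -- slope estimates for the second family of edges
    have hslope2 : ∀ s : ℝ, 0 ≤ s → s ≤ R →
        D0 ≤ |Ea' c2 K s| ∧ (-K * Ea' c2 K s) ≤ -(K/8) * |Ea' c2 K s| := by
      intro s _ hsR
      exact P2_est hc2pos hKpos hm2 hsR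
    have hslopeb : ∀ s ∈ Icc (0:ℝ) (D.ℓ b), r0 ≤ |s - tb| →
        (D0 ≤ |P1 c1 K ε tb s| ∧ Bb ≤ |P1 c1 K ε tb s| ∧
         P1' c1 K ε tb s ≤ -(K/8) * |P1 c1 K ε tb s|) := by
      intro s hs hr
      have hzR : |s - tb| ≤ R := by
        rw [abs_le]
        refine ⟨by linarith [hs.1, htbR, hR b], by linarith [hs.2, htb0, hR b]⟩
      exact P1_est hc1pos hKpos hεpos hεr0 hr0pos hεg hm1 hD0pos hBb0 hzR hr
    -- case analysis on the location of the maximum point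
    rcases eq_or_lt_of_le hsS.1 with h0 | hspos
    · -- maximum at the junction point O
      have hsS0 : sS = 0 := h0.symm
      have hIccb0 : (0:ℝ) ∈ Icc (0:ℝ) (D.ℓ b) := ⟨le_refl 0, (D.ℓ_pos b).le⟩
      have hwO : ∀ j'', w j'' 0 = θε := by
        intro j''
        have h2 : w j'' 0 = w iS 0 := by
          rw [hwdef]; simp only
          rw [hglu j'' iS, hglue j'', hglue iS]
        rw [h2, hθεdef, hsS0]
      by_cases htbr : tb < r0
      · exact htrap 0 hIccb0
          (by rw [show (0:ℝ) - tb = -tb by ring, abs_neg, abs_of_nonneg htb0]; exact htbr)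
          (hwO b)
      · push_neg at htbr
        have hz0 : r0 ≤ |0 - tb| := by
          rw [show (0:ℝ) - tb = -tb by ring, abs_neg, abs_of_nonneg htb0]; exact htbr
        have hmaxO : LocalMaxO D w := by
          refine ⟨1, one_pos, fun j'' s hs _ => ?_⟩
          rw [hwO j'']
          exact hglobal j'' s hs
        rcases hOC hmaxO with ⟨iG, hiG⟩ | hF
        · have h3 : 0 < G D iG (u iG 0) (deriv (φ iG) 0) (deriv (deriv (φ iG)) 0) 0 := by
            by_cases hi : iG = b
            · rw [hi]
              rw [hddφb, hdφb]
              obtain ⟨hD0le, _, hX⟩ := hslopeb 0 hIccb0 hz0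
              exact edge b 0 hIccb0 _ _ _ (hubm b 0 hIccb0) hD0le hX
            · rw [hddφo iG hi, hdφo iG hi]
              obtain ⟨hD0le, hX⟩ := hslope2 0 (le_refl 0) hR0
              exact edge iG 0 ⟨le_refl 0, (D.ℓ_pos iG).le⟩ _ _ _
                (hubm iG 0 ⟨le_refl 0, (D.ℓ_pos iG).le⟩) hD0le hX
          exact absurd hiG (not_le.2 h3)
        · -- Kirchhoff condition is violated
          have hp : (fun j'' => deriv (φ j'') 0) =
              Function.update (fun _ : Fin N => c2*K) b (P1 c1 K ε tb 0) := by
            funext j''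
            by_cases hj : j'' = b
            · subst hj; rw [hdφb]; simp [Function.update]
            · rw [hdφo j'' hj, Function.update_of_ne hj]
              simp [Ea']
          obtain ⟨_, hBble, _⟩ := hslopeb 0 hIccb0 hz0
          have hneg : P1 c1 K ε tb 0 < 0 := by
            rw [P1]
            apply mul_neg_of_pos_of_neg (Ea'_pos hc1pos hKpos _)
            rw [gfun']
            apply div_neg_of_neg_of_pos _ (sqrt_sq_add_sq_pos hεpos.ne')
            rw [zero_sub]
            linarith
          have hle : P1 c1 K ε tb 0 ≤ -Bb := by
            rw [abs_of_neg hneg] at hBble; linarith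
          have h1 : 1 ≤ D.F (-M) (Function.update (fun _ : Fin N => c2*K) b (P1 c1 K ε tb 0)) :=
            hBb b _ hle
          have h2 : D.F (-M) (Function.update (fun _ : Fin N => c2*K) b (P1 c1 K ε tb 0)) ≤
              D.F (u b 0) (fun j'' => deriv (φ j'') 0) := by
            rw [hp]
            exact hKir.1 (u b 0) (-M) _ _ (hubm b 0 hIccb0) (fun i => le_refl _)
          have h3 := hF b
          linarith
    rcases eq_or_lt_of_le hsS.2 with hend | hslt
    · -- maximum at a boundary vertex
      have hIccv : D.ℓ iS ∈ Icc (0:ℝ) (D.ℓ iS) := ⟨(D.ℓ_pos iS).le, le_refl _⟩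
      have hmaxV : LocalMaxVert D w iS := by
        refine ⟨1, one_pos, fun s hs _ => ?_⟩
        have h2 : w iS (D.ℓ iS) = θε := by rw [hθεdef, hend]
        rw [h2]
        exact hglobal iS s hs
      rcases hVC iS hmaxV with hG | hh
      · have h3 : 0 < G D iS (u iS (D.ℓ iS)) (deriv (φ iS) (D.ℓ iS))
            (deriv (deriv (φ iS)) (D.ℓ iS)) (D.ℓ iS) := by
          by_cases hi : iS = b
          · rw [hi]
            rw [hddφb, hdφb]
            have h4 := hΓ b
            rw [if_pos rfl] at h4
            have hz : r0 ≤ |D.ℓ b - tb| := by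
              rw [abs_of_pos (by linarith)]; linarith
            obtain ⟨hD0le, _, hX⟩ := hslopeb (D.ℓ b) ⟨(D.ℓ_pos b).le, le_refl _⟩ hz
            exact edge b _ ⟨(D.ℓ_pos b).le, le_refl _⟩ _ _ _
              (hubm b _ ⟨(D.ℓ_pos b).le, le_refl _⟩) hD0le hX
          · rw [hddφo iS hi, hdφo iS hi]
            obtain ⟨hD0le, hX⟩ := hslope2 (D.ℓ iS) (D.ℓ_pos iS).le (hR iS)
            exact edge iS _ hIccv _ _ _ (hubm iS _ hIccv) hD0le hX
        exact absurd hG (not_le.2 h3)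
      · -- Dirichlet branch
        have hwv : θε = u iS (D.ℓ iS) - φ iS (D.ℓ iS) := by
          rw [hθεdef, hend, hwdef]
        have hφbig : M + hb + 1 ≤ φ iS (D.ℓ iS) - u b tb := by
          by_cases hi : iS = b
          · rw [hi, hφb]
            have h4 := hΓ b
            rw [if_pos rfl] at h4
            have hglb : δ/4 ≤ gfun ε (D.ℓ b - tb) := by
              have h5 : δ ≤ |D.ℓ b - tb| := by
                rw [abs_of_pos (by linarith)]; linarith
              have h6 := gfun_lb hεpos.le (show (0:ℝ) ≤ δ by linarith) h5
              linarith
            have h7 := Ea_mono hc1pos.le hKpos.le hglb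
            simp only
            linarith
          · rw [hφo iS hi]
            simp only [hA2def]
            by_cases hcase : δ/2 ≤ tb
            · have hglb : δ/4 ≤ gfun ε tb := by
                have h5 : δ/2 ≤ |tb| := by rw [abs_of_nonneg htb0]; exact hcase
                have h6 := gfun_lb hεpos.le (show (0:ℝ) ≤ δ/2 by linarith) h5
                linarith
              have h7 := Ea_mono hc1pos.le hKpos.le hglb
              have h8 : 0 ≤ Ea c2 K (D.ℓ iS) := Ea_nonneg hc2pos.le hKpos.le (D.ℓ_pos iS).le
              linarith
            · push_neg at hcase
              have h4 := hΓ iS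
              rw [if_neg hi] at h4
              have h5 : δ/2 ≤ D.ℓ iS := by linarith
              have h7 := Ea_mono hc2pos.le hKpos.le h5
              have h8 : 0 ≤ Ea c1 K (gfun ε tb) :=
                Ea_nonneg hc1pos.le hKpos.le (gfun_nonneg hεpos.le tb)
              linarith
        have h6 : -M ≤ u b tb := hubm b tb htb
        have h7 := hhb iS
        linarith
    · -- interior maximum point
      by_cases hnear : iS = b ∧ |sS - tb| < r0
      · obtain ⟨hi, hlt⟩ := hnear
        refine htrap sS ?_ hlt ?_
        · rw [← hi]; exact hsS
        · rw [hθεdef, hi]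
      · have hmaxE : LocalMaxEdge D w iS sS := by
          refine ⟨1, one_pos, fun s hs _ => ?_⟩
          exact (hglobal iS s hs).trans_eq hθεdef
        have hGle := hintC iS sS ⟨hspos, hslt⟩ hmaxE
        have h3 : 0 < G D iS (u iS sS) (deriv (φ iS) sS) (deriv (deriv (φ iS)) sS) sS := by
          by_cases hi : iS = b
          · have hfar : r0 ≤ |sS - tb| := by
              by_contra hcl
              push_neg at hcl
              exact hnear ⟨hi, hcl⟩
            have hsSb : sS ∈ Icc (0:ℝ) (D.ℓ b) := hi ▸ hsS
            rw [hi]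
            rw [hddφb, hdφb]
            obtain ⟨hD0le, _, hX⟩ := hslopeb sS hsSb hfar
            exact edge b sS hsSb _ _ _ (hubm b sS hsSb) hD0le hX
          · rw [hddφo iS hi, hdφo iS hi]
            obtain ⟨hD0le, hX⟩ := hslope2 sS hsS.1 (hsS.2.trans (hR iS))
            exact edge iS sS hsS _ _ _ (hubm iS sS hsS) hD0le hX
        exact absurd hGle (not_le.2 h3)
  -- conclusion from the one-sided estimates
  have hforward := claim j' t' ht' hΓj' j t ht
  have hbackward := claim j t ht hΓj j' t' ht'
  have hL1 : c1 * K ≤ (max c1 c2) * K + 1 := by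
    have h := le_max_left c1 c2
    nlinarith
  have hL2 : c2 * K ≤ (max c1 c2) * K + 1 := by
    have h := le_max_right c1 c2
    nlinarith
  rw [abs_sub_le_iff]
  constructor
  · by_cases hjj : j = j'
    · rw [if_pos hjj]
      rw [if_pos hjj] at hforward
      have h1 : Ea c1 K |t - t'| ≤ c1 * K * |t - t'| := Ea_le_linear hc1pos.le (abs_nonneg _)
      have h2 : c1 * K * |t - t'| ≤ ((max c1 c2) * K + 1) * |t - t'| :=
        mul_le_mul_of_nonneg_right hL1 (abs_nonneg _)
      linarith
    · rw [if_neg hjj]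
      rw [if_neg hjj] at hforward
      have h1 : Ea c1 K t' ≤ c1 * K * t' := Ea_le_linear hc1pos.le ht'.1
      have h2 : Ea c2 K t ≤ c2 * K * t := Ea_le_linear hc2pos.le ht.1
      nlinarith [mul_le_mul_of_nonneg_right hL1 ht'.1, mul_le_mul_of_nonneg_right hL2 ht.1]
  · by_cases hjj : j = j'
    · rw [if_pos hjj]
      rw [if_pos hjj.symm, abs_sub_comm t' t] at hbackward
      have h1 : Ea c1 K |t - t'| ≤ c1 * K * |t - t'| := Ea_le_linear hc1pos.le (abs_nonneg _)
      have h2 : c1 * K * |t - t'| ≤ ((max c1 c2) * K + 1) * |t - t'| :=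
        mul_le_mul_of_nonneg_right hL1 (abs_nonneg _)
      linarith
    · rw [if_neg hjj]
      rw [if_neg (fun h => hjj h.symm)] at hbackward
      have h1 : Ea c1 K t ≤ c1 * K * t := Ea_le_linear hc1pos.le ht.1
      have h2 : Ea c2 K t' ≤ c2 * K * t' := Ea_le_linear hc2pos.le ht'.1
      nlinarith [mul_le_mul_of_nonneg_right hL1 ht.1, mul_le_mul_of_nonneg_right hL2 ht'.1]




end Paper
end

section
/- Reduction of the junction condition to the degenerate edges: assume only that each H_i is continuous and each a_i is continuous and nonnegative, and let 𝒟 = {i : a_i(O) = 0}. (1) If u ∈ USC(Γ) is a viscosity subsolution of problem (P) and φ ∈ C²(Γ) is such that O is a local maximum point of u − φ, then min{ min_{i∈𝒟} [ λ u(O) + H_i(O, φ_{x_i}(O)) ], F(u(O), φ_{x_1}(O),…,φ_{x_N}(O)) } ≤ 0. (2) If v ∈ LSC(Γ) is a viscosity supersolution of problem (P) and φ ∈ C²(Γ) is such that O is a local minimum point of v − φ, then max{ max_{i∈𝒟} [ λ v(O) + H_i(O, φ_{x_i}(O)) ], F(v(O), φ_{x_1}(O),…,φ_{x_N}(O)) }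 ≥ 0. -/
open Set Filter Topology

namespace Paper

variable {N : ℕ}

/-! ### Auxiliary lemmas for the proof of Proposition 3.2 -/

/-- Derivative of the quadratic perturbation `s ↦ b s - m s²`. -/
lemma pert_hasDerivAt (b m t : ℝ) :
    HasDerivAt (fun s : ℝ => b * s - m * s ^ 2) (b - 2 * m * t) t := by
  have h1 : HasDerivAt (fun s : ℝ => b * s) b t := by
    simpa using (hasDerivAt_id t).const_mul b
  have h2 : HasDerivAt (fun s : ℝ => m * s ^ 2) (2 * m * t) t := by
    have := (hasDerivAt_pow 2 t).const_mul m
    exact this.congr_deriv (by push_cast; ring)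
  exact h1.sub h2

lemma contDiff_deriv_of_two {f : ℝ → ℝ} (hf : ContDiff ℝ 2 f) :
    Differentiable ℝ (deriv f) := by
  have h : ContDiff ℝ ((1:ℕ∞)+1) f := by norm_num; exact_mod_cast hf
  exact (contDiff_succ_iff_deriv.mp h).2.2.differentiable (by norm_num)

/-- First derivative of a C² function plus the quadratic perturbation. -/
lemma deriv_addPert {f : ℝ → ℝ} (hf : ContDiff ℝ 2 f) (b m t : ℝ) :
    deriv (fun s => f s + (b * s - m * s ^ 2)) t = deriv f t + (b - 2 * m * t) := by
  have hfd : HasDerivAt f (deriv f t) t :=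
    ((hf.differentiable (by norm_num)) t).hasDerivAt
  exact (hfd.add (pert_hasDerivAt b m t)).deriv

/-- Second derivative at `0` of a C² function plus the quadratic perturbation. -/
lemma deriv2_addPert {f : ℝ → ℝ} (hf : ContDiff ℝ 2 f) (b m : ℝ) :
    deriv (deriv (fun s => f s + (b * s - m * s ^ 2))) 0
      = deriv (deriv f) 0 - 2 * m := by
  have h1 : deriv (fun s => f s + (b * s - m * s ^ 2))
      = fun t => deriv f t + (b - 2 * m * t) := funext (deriv_addPert hf b m)
  rw [h1]
  have hfd : HasDerivAt (deriv f) (deriv (deriv f) 0) 0 :=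
    ((contDiff_deriv_of_two hf) 0).hasDerivAt
  have hlin : HasDerivAt (fun t : ℝ => b - 2 * m * t) (-(2 * m)) 0 := by
    have := ((hasDerivAt_id (0:ℝ)).const_mul (2*m)).const_sub b
    simpa using this
  have := (hfd.add hlin).deriv
  rw [show (fun t => deriv f t + (b - 2 * m * t)) = (deriv f + fun t => b - 2 * m * t) from rfl, this]; ring

/-- C² regularity of the perturbed test function. -/
lemma contDiff_addPert {f : ℝ → ℝ} (hf : ContDiff ℝ 2 f) (b m : ℝ) :
    ContDiff ℝ 2 (fun s => f s + (b * s - m * s ^ 2)) :=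
  hf.add ((contDiff_const.mul contDiff_id).sub
    (contDiff_const.mul (contDiff_id.pow 2)))

/-- The perturbation is nonnegative for `0 ≤ s < ε / M` when `c ∈ {0,1}`, `ε > 0`, `M > 0`. -/
lemma pert_nonneg {c ε M s : ℝ} (hc : c = 0 ∨ c = 1) (hε : 0 < ε) (hM : 0 < M)
    (hs0 : 0 ≤ s) (hsM : s < ε / M) : 0 ≤ c * ε * s - c * M * s ^ 2 := by
  rcases hc with hc | hc
  · simp [hc]
  · subst hc
    have hMs : M * s < ε := by
      have := (lt_div_iff₀ hM).mp hsM; linarith [this]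
    nlinarith

/-- Key claim for the subsolution half: for every `ε > 0`, either a degenerate
edge realizes the first-order inequality, or the Kirchhoff inequality holds at
the slopes perturbed by `ε` on the non-degenerate edges. -/
lemma sub_claim (D : Data N) (u φ : Fin N → ℝ → ℝ) (hu : IsSubsol D u)
    (hφ : IsTest φ) (hmax : LocalMaxO D (fun j s => u j s - φ j s))
    (ε : ℝ) (hε : 0 < ε) :
    (∃ i, D.a i 0 = 0 ∧ D.lam * u i 0 + D.H i 0 (deriv (φ i) 0) ≤ 0) ∨
    (∀ i, D.F (u i 0)
      (fun j => deriv (φ j) 0 + (if D.a j 0 = 0 then 0 else 1) * ε) ≤ 0) := by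
  classical
  obtain ⟨husc, hglue, hcond⟩ := hu
  set c : Fin N → ℝ := fun j => if D.a j 0 = 0 then 0 else 1 with hc_def
  have hc01 : ∀ j, c j = 0 ∨ c j = 1 := by
    intro j; by_cases h : D.a j 0 = 0 <;> simp [hc_def, h]
  set base : Fin N → ℝ := fun i =>
    D.lam * u i 0 - D.a i 0 * deriv (deriv (φ i)) 0 + D.H i 0 (deriv (φ i) 0 + ε)
    with hbase_def
  set M : ℝ := 1 + ∑ i, max 0 (-(base i) / (2 * D.a i 0)) with hM_def
  have hM1 : (1:ℝ) ≤ M := by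
    have : (0:ℝ) ≤ ∑ i, max 0 (-(base i) / (2 * D.a i 0)) :=
      Finset.sum_nonneg fun i _ => le_max_left _ _
    simp [hM_def]; linarith
  have hMpos : (0:ℝ) < M := lt_of_lt_of_le one_pos hM1
  -- key positivity on non-degenerate edges
  have hkey : ∀ i, D.a i 0 ≠ 0 → 0 < base i + 2 * M * D.a i 0 := by
    intro i hai
    have ha0 : 0 ≤ D.a i 0 := D.a_nonneg i 0 ⟨le_refl 0, (D.ℓ_pos i).le⟩
    have ha : 0 < D.a i 0 := lt_of_le_of_ne ha0 (Ne.symm hai)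
    have h1 : max 0 (-(base i) / (2 * D.a i 0)) ≤ M - 1 := by
      have := Finset.single_le_sum
        (f := fun i => max 0 (-(base i) / (2 * D.a i 0)))
        (fun j _ => le_max_left _ _) (Finset.mem_univ i)
      simp only [hM_def]; linarith
    have h2 : -(base i) / (2 * D.a i 0) ≤ M - 1 :=
      le_trans (le_max_right _ _) h1
    have h3 : -(base i) ≤ (M - 1) * (2 * D.a i 0) :=
      (div_le_iff₀ (by positivity)).mp h2
    nlinarith
  -- the perturbed test function
  set ψ : Fin N → ℝ → ℝ :=
    fun j s => φ j s + (c j * ε * s - c j * M * s ^ 2) with hψ_def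
  have hψ0 : ∀ j, ψ j 0 = φ j 0 := by intro j; simp [hψ_def]
  have hψtest : IsTest ψ := by
    refine ⟨fun i j => ?_, fun j => contDiff_addPert (hφ.2 j) _ _⟩
    rw [hψ0, hψ0]; exact hφ.1 i j
  have hψd1 : ∀ j, deriv (ψ j) 0 = deriv (φ j) 0 + c j * ε := by
    intro j
    rw [hψ_def]
    rw [deriv_addPert (hφ.2 j) (c j * ε) (c j * M) 0]
    ring
  have hψd2 : ∀ j, deriv (deriv (ψ j)) 0 = deriv (deriv (φ j)) 0 - 2 * (c j * M) := by
    intro j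
    rw [hψ_def]
    exact deriv2_addPert (hφ.2 j) (c j * ε) (c j * M)
  -- local max of u - ψ at O
  have hmax' : LocalMaxO D (fun j s => u j s - ψ j s) := by
    obtain ⟨δ, hδpos, hδ⟩ := hmax
    refine ⟨min δ (ε / M), lt_min hδpos (by positivity), ?_⟩
    intro j s hs hsδ
    have h1 : u j s - φ j s ≤ u j 0 - φ j 0 :=
      hδ j s hs (lt_of_lt_of_le hsδ (min_le_left _ _))
    have h2 : 0 ≤ c j * ε * s - c j * M * s ^ 2 :=
      pert_nonneg (hc01 j) hε hMpos hs.1 (lt_of_lt_of_le hsδ (min_le_right _ _))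
    show u j s - ψ j s ≤ u j 0 - ψ j 0
    rw [hψ0, hψ_def]
    dsimp only
    linarith
  rcases (hcond ψ hψtest).2.1 hmax' with ⟨i, hG⟩ | hF
  · -- first alternative: necessarily a degenerate edge
    left
    by_cases hai : D.a i 0 = 0
    · refine ⟨i, hai, ?_⟩
      have hci : c i = 0 := by simp [hc_def, hai]
      rw [G, hψd1, hψd2, hci, hai] at hG
      simpa using hG
    · exfalso
      have hci : c i = 1 := by simp [hc_def, hai]
      rw [G, hψd1, hψd2, hci, one_mul, one_mul] at hG
      have := hkey i hai
      simp only [hbase_def] at this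
      nlinarith
  · -- second alternative
    right
    intro i
    have := hF i
    have hd : (fun j => deriv (ψ j) 0)
        = fun j => deriv (φ j) 0 + (if D.a j 0 = 0 then 0 else 1) * ε := by
      funext j; rw [hψd1]
    rwa [hd] at this

/-- Key claim for the supersolution half. -/
lemma super_claim (D : Data N) (v φ : Fin N → ℝ → ℝ) (hv : IsSupersol D v)
    (hφ : IsTest φ) (hmin : LocalMinO D (fun j s => v j s - φ j s))
    (ε : ℝ) (hε : 0 < ε) :
    (∃ i, D.a i 0 = 0 ∧ 0 ≤ D.lam * v i 0 + D.H i 0 (deriv (φ i) 0)) ∨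
    (∀ i, 0 ≤ D.F (v i 0)
      (fun j => deriv (φ j) 0 - (if D.a j 0 = 0 then 0 else 1) * ε)) := by
  classical
  obtain ⟨hlsc, hglue, hcond⟩ := hv
  set c : Fin N → ℝ := fun j => if D.a j 0 = 0 then 0 else 1 with hc_def
  have hc01 : ∀ j, c j = 0 ∨ c j = 1 := by
    intro j; by_cases h : D.a j 0 = 0 <;> simp [hc_def, h]
  set base : Fin N → ℝ := fun i =>
    D.lam * v i 0 - D.a i 0 * deriv (deriv (φ i)) 0 + D.H i 0 (deriv (φ i) 0 - ε)
    with hbase_def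
  set M : ℝ := 1 + ∑ i, max 0 (base i / (2 * D.a i 0)) with hM_def
  have hM1 : (1:ℝ) ≤ M := by
    have : (0:ℝ) ≤ ∑ i, max 0 (base i / (2 * D.a i 0)) :=
      Finset.sum_nonneg fun i _ => le_max_left _ _
    simp [hM_def]; linarith
  have hMpos : (0:ℝ) < M := lt_of_lt_of_le one_pos hM1
  have hkey : ∀ i, D.a i 0 ≠ 0 → base i - 2 * M * D.a i 0 < 0 := by
    intro i hai
    have ha0 : 0 ≤ D.a i 0 := D.a_nonneg i 0 ⟨le_refl 0, (D.ℓ_pos i).le⟩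
    have ha : 0 < D.a i 0 := lt_of_le_of_ne ha0 (Ne.symm hai)
    have h1 : max 0 (base i / (2 * D.a i 0)) ≤ M - 1 := by
      have := Finset.single_le_sum
        (f := fun i => max 0 (base i / (2 * D.a i 0)))
        (fun j _ => le_max_left _ _) (Finset.mem_univ i)
      simp only [hM_def]; linarith
    have h2 : base i / (2 * D.a i 0) ≤ M - 1 :=
      le_trans (le_max_right _ _) h1
    have h3 : base i ≤ (M - 1) * (2 * D.a i 0) :=
      (div_le_iff₀ (by positivity)).mp h2
    nlinarith
  set ψ : Fin N → ℝ → ℝ :=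
    fun j s => φ j s + ((-(c j * ε)) * s - (-(c j * M)) * s ^ 2) with hψ_def
  have hψ0 : ∀ j, ψ j 0 = φ j 0 := by intro j; simp [hψ_def]
  have hψtest : IsTest ψ := by
    refine ⟨fun i j => ?_, fun j => contDiff_addPert (hφ.2 j) _ _⟩
    rw [hψ0, hψ0]; exact hφ.1 i j
  have hψd1 : ∀ j, deriv (ψ j) 0 = deriv (φ j) 0 - c j * ε := by
    intro j
    rw [hψ_def]
    rw [deriv_addPert (hφ.2 j) (-(c j * ε)) (-(c j * M)) 0]
    ring
  have hψd2 : ∀ j, deriv (deriv (ψ j)) 0 = deriv (deriv (φ j)) 0 + 2 * (c j * M) := by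
    intro j
    rw [hψ_def]
    rw [deriv2_addPert (hφ.2 j) (-(c j * ε)) (-(c j * M))]
    ring
  have hmin' : LocalMinO D (fun j s => v j s - ψ j s) := by
    obtain ⟨δ, hδpos, hδ⟩ := hmin
    refine ⟨min δ (ε / M), lt_min hδpos (by positivity), ?_⟩
    intro j s hs hsδ
    have h1 : v j 0 - φ j 0 ≤ v j s - φ j s :=
      hδ j s hs (lt_of_lt_of_le hsδ (min_le_left _ _))
    have h2 : 0 ≤ c j * ε * s - c j * M * s ^ 2 :=
      pert_nonneg (hc01 j) hε hMpos hs.1 (lt_of_lt_of_le hsδ (min_le_right _ _))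
    show v j 0 - ψ j 0 ≤ v j s - ψ j s
    rw [hψ0, hψ_def]
    dsimp only
    linarith
  rcases (hcond ψ hψtest).2.1 hmin' with ⟨i, hG⟩ | hF
  · left
    by_cases hai : D.a i 0 = 0
    · refine ⟨i, hai, ?_⟩
      have hci : c i = 0 := by simp [hc_def, hai]
      rw [G, hψd1, hψd2, hci, hai] at hG
      simpa using hG
    · exfalso
      have hci : c i = 1 := by simp [hc_def, hai]
      rw [G, hψd1, hψd2, hci, one_mul, one_mul] at hG
      have := hkey i hai
      simp only [hbase_def] at this
      nlinarith
  · right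
    intro i
    have := hF i
    have hd : (fun j => deriv (ψ j) 0)
        = fun j => deriv (φ j) 0 - (if D.a j 0 = 0 then 0 else 1) * ε := by
      funext j; rw [hψd1]
    rwa [hd] at this

/-- Proposition 3.2, reduction of the junction condition to
the degenerate edges.  Assuming only continuity of the data, at a local
maximum (resp. minimum) point `O` of `u − φ` (resp. `v − φ`), the junction
viscosity inequality reduces to a first-order inequality involving only the
edges on which the diffusion vanishes at `O`. -/
theorem junction_condition_reduction (N : ℕ) (D : Data N) :
    (∀ (u φ : Fin N → ℝ → ℝ), IsSubsol D u → IsTest φ →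
      LocalMaxO D (fun j s => u j s - φ j s) →
      (∃ i, D.a i 0 = 0 ∧ D.lam * u i 0 + D.H i 0 (deriv (φ i) 0) ≤ 0) ∨
      (∀ i, D.F (u i 0) (fun j => deriv (φ j) 0) ≤ 0)) ∧
    (∀ (v φ : Fin N → ℝ → ℝ), IsSupersol D v → IsTest φ →
      LocalMinO D (fun j s => v j s - φ j s) →
      (∃ i, D.a i 0 = 0 ∧ 0 ≤ D.lam * v i 0 + D.H i 0 (deriv (φ i) 0)) ∨
      (∀ i, 0 ≤ D.F (v i 0) (fun j => deriv (φ j) 0))) := by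
  classical
  constructor
  · intro u φ hu hφ hmax
    by_cases hleft : ∃ i, D.a i 0 = 0 ∧ D.lam * u i 0 + D.H i 0 (deriv (φ i) 0) ≤ 0
    · exact Or.inl hleft
    · right
      intro i
      have hseq : ∀ n : ℕ, D.F (u i 0)
          (fun j => deriv (φ j) 0 + (if D.a j 0 = 0 then 0 else 1) * (1 / (n + 1))) ≤ 0 := by
        intro n
        rcases sub_claim D u φ hu hφ hmax (1 / (n + 1)) (by positivity) with h | h
        · exact absurd h hleft
        · exact h i
      have hlim : Filter.Tendsto
          (fun n : ℕ => D.F (u i 0)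
            (fun j => deriv (φ j) 0 + (if D.a j 0 = 0 then 0 else 1) * (1 / ((n:ℝ) + 1))))
          Filter.atTop (nhds (D.F (u i 0) (fun j => deriv (φ j) 0))) := by
        have hp : Filter.Tendsto
            (fun n : ℕ => (fun j => deriv (φ j) 0 +
              (if D.a j 0 = 0 then 0 else 1) * (1 / ((n:ℝ) + 1)) : Fin N → ℝ))
            Filter.atTop (nhds (fun j => deriv (φ j) 0)) := by
          rw [tendsto_pi_nhds]
          intro j
          have := tendsto_one_div_add_atTop_nhds_zero_nat.const_mul
            (if D.a j 0 = 0 then (0:ℝ) else 1)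
          have h' := tendsto_const_nhds (x := deriv (φ j) 0)
            (f := Filter.atTop (α := ℕ)) |>.add this
          simpa using h'
        have hq : Filter.Tendsto
            (fun n : ℕ => ((u i 0 : ℝ), (fun j => deriv (φ j) 0 +
              (if D.a j 0 = 0 then 0 else 1) * (1 / ((n:ℝ) + 1)) : Fin N → ℝ)))
            Filter.atTop (nhds ((u i 0), fun j => deriv (φ j) 0)) :=
          tendsto_const_nhds.prodMk_nhds hp
        exact (D.F_cont.tendsto _).comp hq
      exact le_of_tendsto' hlim hseq
  · intro v φ hv hφ hmin
    by_cases hleft : ∃ i, D.a i 0 = 0 ∧ 0 ≤ D.lam * v i 0 + D.H i 0 (deriv (φ i) 0)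
    · exact Or.inl hleft
    · right
      intro i
      have hseq : ∀ n : ℕ, 0 ≤ D.F (v i 0)
          (fun j => deriv (φ j) 0 - (if D.a j 0 = 0 then 0 else 1) * (1 / (n + 1))) := by
        intro n
        rcases super_claim D v φ hv hφ hmin (1 / (n + 1)) (by positivity) with h | h
        · exact absurd h hleft
        · exact h i
      have hlim : Filter.Tendsto
          (fun n : ℕ => D.F (v i 0)
            (fun j => deriv (φ j) 0 - (if D.a j 0 = 0 then 0 else 1) * (1 / ((n:ℝ) + 1))))
          Filter.atTop (nhds (D.F (v i 0) (fun j => deriv (φ j) 0))) := by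
        have hp : Filter.Tendsto
            (fun n : ℕ => (fun j => deriv (φ j) 0 -
              (if D.a j 0 = 0 then 0 else 1) * (1 / ((n:ℝ) + 1)) : Fin N → ℝ))
            Filter.atTop (nhds (fun j => deriv (φ j) 0)) := by
          rw [tendsto_pi_nhds]
          intro j
          have := tendsto_one_div_add_atTop_nhds_zero_nat.const_mul
            (if D.a j 0 = 0 then (0:ℝ) else 1)
          have h' := tendsto_const_nhds (x := deriv (φ j) 0)
            (f := Filter.atTop (α := ℕ)) |>.sub this
          simpa using h'
        have hq : Filter.Tendsto
            (fun n : ℕ => ((v i 0 : ℝ), (fun j => deriv (φ j) 0 -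
              (if D.a j 0 = 0 then 0 else 1) * (1 / ((n:ℝ) + 1)) : Fin N → ℝ)))
            Filter.atTop (nhds ((v i 0), fun j => deriv (φ j) 0)) :=
          tendsto_const_nhds.prodMk_nhds hp
        exact (D.F_cont.tendsto _).comp hq
      exact ge_of_tendsto' hlim hseq
end Paper
end

section
/- Junction conditions via first-order sub/superdifferentials: assume only that each H_i is continuous and each a_i is continuous and nonnegative, and let 𝒟 = {i : a_i(O) = 0}. (1) If u ∈ USC(Γ) is a viscosity subsolution of problem (P) and p = (p_1,…,p_N) ∈ D⁺u(O), then min{ min_{i∈𝒟} [ λ u(O) + H_i(O, p_i) ], F(u(O), p) } ≤ 0. (2) If v ∈ LSC(Γ) is a viscosity supersolution of problem (P) and q = (q_1,…,q_N) ∈ D⁻v(O), then max{ max_{i∈𝒟} [ λ v(O) + H_i(O, q_i) ], F(v(O), q) } ≥ 0. -/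
open Set Filter Topology

namespace Paper

variable {N : ℕ}

/-- One-dimensional (first-order) superdifferential at `0⁺` of `w : [0,∞) → ℝ`:
`p ∈ D⁺w(0)` iff `w(t) ≤ w(0) + p t + o(t)` as `t → 0⁺`. -/
def D1plus (w : ℝ → ℝ) : Set ℝ :=
  {p | ∀ ε > 0, ∀ᶠ t in 𝓝[>] (0:ℝ), w t ≤ w 0 + p * t + ε * t}

/-- One-dimensional (first-order) subdifferential at `0⁺`:
`q ∈ D⁻w(0)` iff `w(t) ≥ w(0) + q t + o(t)` as `t → 0⁺`. -/
def D1minus (w : ℝ → ℝ) : Set ℝ :=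
  {q | ∀ ε > 0, ∀ᶠ t in 𝓝[>] (0:ℝ), w 0 + q * t - ε * t ≤ w t}

/-- `limsup_{t→0⁺} (w(t) − w(0))/t`, as an extended real. -/
noncomputable def diffQuotLimsup (w : ℝ → ℝ) : EReal :=
  Filter.limsup (fun t : ℝ => (((w t - w 0) / t : ℝ) : EReal)) (𝓝[>] (0:ℝ))

/-- `liminf_{t→0⁺} (w(t) − w(0))/t`, as an extended real. -/
noncomputable def diffQuotLiminf (w : ℝ → ℝ) : EReal :=
  Filter.liminf (fun t : ℝ => (((w t - w 0) / t : ℝ) : EReal)) (𝓝[>] (0:ℝ))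

lemma quad_hasDerivAt (c b K t : ℝ) :
    HasDerivAt (fun s : ℝ => c + b*s + K*s^2) (b + K*(2*t)) t := by
  have h1 : HasDerivAt (fun s:ℝ => c + b*s) (0 + b*1) t :=
    (hasDerivAt_const t c).add ((hasDerivAt_id t).const_mul b)
  have h2 : HasDerivAt (fun s:ℝ => K*s^2) (K*((2:ℕ)*t^(2-1))) t :=
    (hasDerivAt_pow 2 t).const_mul K
  exact (h1.add h2).congr_deriv (by push_cast; ring)

lemma quad_deriv (c b K : ℝ) :
    deriv (fun s : ℝ => c + b*s + K*s^2) = fun t => b + K*(2*t) :=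
  funext fun t => (quad_hasDerivAt c b K t).deriv

lemma quad_deriv2 (c b K t : ℝ) :
    deriv (deriv (fun s : ℝ => c + b*s + K*s^2)) t = K*2 := by
  rw [quad_deriv]
  have h2 : HasDerivAt (fun s:ℝ => K*(2*s)) (K*(2*1)) t :=
    ((hasDerivAt_id t).const_mul 2).const_mul K
  have : HasDerivAt (fun s : ℝ => b + K*(2*s)) (K*2) t := by
    exact ((hasDerivAt_const t b).add h2).congr_deriv (by ring)
  exact this.deriv

lemma quad_contDiff (c b K : ℝ) : ContDiff ℝ 2 (fun s:ℝ => c + b*s + K*s^2) := by fun_prop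


lemma sub_eps (D : Data N) (u : Fin N → ℝ → ℝ) (p : Fin N → ℝ)
    (hu : IsSubsol D u) (hp : ∀ i, p i ∈ D1plus (u i)) {ε : ℝ} (hε : 0 < ε) :
    (∃ i, D.a i 0 = 0 ∧ D.lam * u i 0 + D.H i 0 (p i + ε) ≤ 0) ∨
    (∀ i, D.F (u i 0) (fun j => p j + ε) ≤ 0) := by
  classical
  set A : Fin N → ℝ := fun i => D.lam * u i 0 + D.H i 0 (p i + ε) with hA
  set K : Fin N → ℝ := fun i =>
    if 0 < D.a i 0 then (|A i| + 1) / (2 * D.a i 0) else 0 with hK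
  have hK0 : ∀ i, 0 ≤ K i := by
    intro i; rw [hK]; dsimp only
    split_ifs with h
    · positivity
    · exact le_rfl
  set φ : Fin N → ℝ → ℝ := fun i t => u i 0 + (p i + ε) * t + (-(K i)) * t ^ 2 with hφ
  have hφ0 : ∀ i, φ i 0 = u i 0 := by intro i; simp [hφ]
  have htest : IsTest φ := by
    constructor
    · intro i j; rw [hφ0, hφ0]; exact hu.2.1 i j
    · intro i; exact quad_contDiff _ _ _
  have hd1 : ∀ i, deriv (φ i) 0 = p i + ε := by
    intro i
    have := (quad_hasDerivAt (u i 0) (p i + ε) (-(K i)) 0).deriv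
    rw [hφ]; rw [this]; ring
  have hd2 : ∀ i, deriv (deriv (φ i)) 0 = (-(K i)) * 2 := by
    intro i; rw [hφ]; exact quad_deriv2 _ _ _ 0
  -- local max at O
  have hev : ∀ᶠ t in 𝓝[>] (0:ℝ),
      (∀ j, u j t ≤ u j 0 + p j * t + (ε/2) * t) ∧ (∀ j, K j * t < ε/2) := by
    apply Filter.Eventually.and
    · exact Filter.eventually_all.2 fun j => hp j (ε/2) (by positivity)
    · refine Filter.eventually_all.2 fun j => ?_
      have ht : Filter.Tendsto (fun t : ℝ => K j * t) (𝓝[>] (0:ℝ)) (𝓝 (K j * 0)) :=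
        ((continuous_const.mul continuous_id).tendsto 0).mono_left nhdsWithin_le_nhds
      rw [mul_zero] at ht
      exact ht.eventually (eventually_lt_nhds (by positivity))
  obtain ⟨δ, hδ, hIoo⟩ := mem_nhdsGT_iff_exists_Ioo_subset.1 hev
  have hmax : LocalMaxO D (fun j s => u j s - φ j s) := by
    refine ⟨δ, hδ, ?_⟩
    intro j s hs hsδ
    rcases eq_or_lt_of_le hs.1 with h0 | h0
    · rw [← h0]
    · have hPs := hIoo ⟨h0, hsδ⟩
      have h1 := hPs.1 j
      have h2 := hPs.2 j
      have h3 : K j * s * s < (ε/2) * s := by nlinarith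
      show u j s - φ j s ≤ u j 0 - φ j 0
      rw [hφ0]
      simp only [hφ]
      nlinarith [hK0 j]
  obtain ⟨-, hO, -⟩ := hu.2.2 φ htest
  rcases hO hmax with ⟨i, hGi⟩ | hF
  · left
    rw [hd1 i, hd2 i] at hGi
    simp only [G] at hGi
    have ha : D.a i 0 = 0 := by
      by_contra hne
      have hpos : 0 < D.a i 0 :=
        lt_of_le_of_ne (D.a_nonneg i 0 ⟨le_rfl, (D.ℓ_pos i).le⟩) (Ne.symm hne)
      have hKi : K i = (|A i| + 1) / (2 * D.a i 0) := by rw [hK]; simp [hpos]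
      have hprod : D.a i 0 * (-(K i) * 2) = -(|A i| + 1) := by
        rw [hKi]; field_simp
      rw [hprod] at hGi
      have hAi : A i = D.lam * u i 0 + D.H i 0 (p i + ε) := rfl
      have := neg_abs_le (A i)
      linarith [hGi, this, hAi ▸ this]
    refine ⟨i, ha, ?_⟩
    rw [ha] at hGi
    linarith [hGi]
  · right
    intro i
    have := hF i
    have heq : (fun j => deriv (φ j) 0) = fun j => p j + ε := funext fun j => hd1 j
    rwa [heq] at this

lemma super_eps (D : Data N) (v : Fin N → ℝ → ℝ) (q : Fin N → ℝ)
    (hv : IsSupersol D v) (hq : ∀ i, q i ∈ D1minus (v i)) {ε : ℝ} (hε : 0 < ε) :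
    (∃ i, D.a i 0 = 0 ∧ 0 ≤ D.lam * v i 0 + D.H i 0 (q i - ε)) ∨
    (∀ i, 0 ≤ D.F (v i 0) (fun j => q j - ε)) := by
  classical
  set A : Fin N → ℝ := fun i => D.lam * v i 0 + D.H i 0 (q i - ε) with hA
  set K : Fin N → ℝ := fun i =>
    if 0 < D.a i 0 then (|A i| + 1) / (2 * D.a i 0) else 0 with hK
  have hK0 : ∀ i, 0 ≤ K i := by
    intro i; rw [hK]; dsimp only
    split_ifs with h
    · positivity
    · exact le_rfl
  set φ : Fin N → ℝ → ℝ := fun i t => v i 0 + (q i - ε) * t + (K i) * t ^ 2 with hφ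
  have hφ0 : ∀ i, φ i 0 = v i 0 := by intro i; simp [hφ]
  have htest : IsTest φ := by
    constructor
    · intro i j; rw [hφ0, hφ0]; exact hv.2.1 i j
    · intro i; exact quad_contDiff _ _ _
  have hd1 : ∀ i, deriv (φ i) 0 = q i - ε := by
    intro i
    have := (quad_hasDerivAt (v i 0) (q i - ε) (K i) 0).deriv
    rw [hφ]; rw [this]; ring
  have hd2 : ∀ i, deriv (deriv (φ i)) 0 = (K i) * 2 := by
    intro i; rw [hφ]; exact quad_deriv2 _ _ _ 0
  have hev : ∀ᶠ t in 𝓝[>] (0:ℝ),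
      (∀ j, v j 0 + q j * t - (ε/2) * t ≤ v j t) ∧ (∀ j, K j * t < ε/2) := by
    apply Filter.Eventually.and
    · exact Filter.eventually_all.2 fun j => hq j (ε/2) (by positivity)
    · refine Filter.eventually_all.2 fun j => ?_
      have ht : Filter.Tendsto (fun t : ℝ => K j * t) (𝓝[>] (0:ℝ)) (𝓝 (K j * 0)) :=
        ((continuous_const.mul continuous_id).tendsto 0).mono_left nhdsWithin_le_nhds
      rw [mul_zero] at ht
      exact ht.eventually (eventually_lt_nhds (by positivity))
  obtain ⟨δ, hδ, hIoo⟩ := mem_nhdsGT_iff_exists_Ioo_subset.1 hev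
  have hmin : LocalMinO D (fun j s => v j s - φ j s) := by
    refine ⟨δ, hδ, ?_⟩
    intro j s hs hsδ
    rcases eq_or_lt_of_le hs.1 with h0 | h0
    · rw [← h0]
    · have hPs := hIoo ⟨h0, hsδ⟩
      have h1 := hPs.1 j
      have h2 := hPs.2 j
      have h3 : K j * s * s < (ε/2) * s := by nlinarith
      show v j 0 - φ j 0 ≤ v j s - φ j s
      rw [hφ0]
      simp only [hφ]
      nlinarith [hK0 j]
  obtain ⟨-, hO, -⟩ := hv.2.2 φ htest
  rcases hO hmin with ⟨i, hGi⟩ | hF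
  · left
    rw [hd1 i, hd2 i] at hGi
    simp only [G] at hGi
    have ha : D.a i 0 = 0 := by
      by_contra hne
      have hpos : 0 < D.a i 0 :=
        lt_of_le_of_ne (D.a_nonneg i 0 ⟨le_rfl, (D.ℓ_pos i).le⟩) (Ne.symm hne)
      have hKi : K i = (|A i| + 1) / (2 * D.a i 0) := by rw [hK]; simp [hpos]
      have hprod : D.a i 0 * (K i * 2) = |A i| + 1 := by
        rw [hKi]; field_simp
      rw [hprod] at hGi
      have hAi : A i = D.lam * v i 0 + D.H i 0 (q i - ε) := rfl
      have := le_abs_self (A i)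
      linarith [hGi, this, hAi ▸ this]
    refine ⟨i, ha, ?_⟩
    rw [ha] at hGi
    linarith [hGi]
  · right
    intro i
    have := hF i
    have heq : (fun j => deriv (φ j) 0) = fun j => q j - ε := funext fun j => hd1 j
    rwa [heq] at this

lemma Hcont0 (D : Data N) (i : Fin N) (g : ℝ → ℝ) (hg : Continuous g) :
    ContinuousAt (fun ε : ℝ => D.H i 0 (g ε)) 0 := by
  have h1 : ContinuousWithinAt (fun z : ℝ × ℝ => D.H i z.1 z.2)
      ((Set.Icc 0 (D.ℓ i)) ×ˢ (Set.univ : Set ℝ))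
      ((fun ε : ℝ => ((0:ℝ), g ε)) 0) :=
    D.H_cont i _ ⟨⟨le_rfl, (D.ℓ_pos i).le⟩, trivial⟩
  have hg' : ContinuousWithinAt (fun ε : ℝ => ((0:ℝ), g ε)) Set.univ 0 :=
    (Continuous.continuousWithinAt (by fun_prop))
  have hmap : Set.MapsTo (fun ε : ℝ => ((0:ℝ), g ε)) Set.univ
      ((Set.Icc 0 (D.ℓ i)) ×ˢ (Set.univ : Set ℝ)) :=
    fun ε _ => ⟨⟨le_rfl, (D.ℓ_pos i).le⟩, trivial⟩
  have := ContinuousWithinAt.comp (f := fun ε : ℝ => ((0:ℝ), g ε)) (g := fun z : ℝ × ℝ => D.H i z.1 z.2) h1 hg' hmap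
  rw [continuousWithinAt_univ] at this
  exact this

/-- Proposition 3.3, junction conditions via first-order
sub/superdifferentials.  Assuming only continuity of the data, the junction
inequalities hold for every `p ∈ D⁺u(O)` (resp. `q ∈ D⁻v(O)`), involving only
the degenerate edges. -/
theorem junction_condition_subdifferential (N : ℕ) (D : Data N) :
    (∀ (u : Fin N → ℝ → ℝ) (p : Fin N → ℝ), IsSubsol D u →
      (∀ i, p i ∈ D1plus (u i)) →
      (∃ i, D.a i 0 = 0 ∧ D.lam * u i 0 + D.H i 0 (p i) ≤ 0) ∨
      (∀ i, D.F (u i 0) p ≤ 0)) ∧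
    (∀ (v : Fin N → ℝ → ℝ) (q : Fin N → ℝ), IsSupersol D v →
      (∀ i, q i ∈ D1minus (v i)) →
      (∃ i, D.a i 0 = 0 ∧ 0 ≤ D.lam * v i 0 + D.H i 0 (q i)) ∨
      (∀ i, 0 ≤ D.F (v i 0) q)) := by

  constructor
  · intro u p hu hp
    by_contra hcon
    push_neg at hcon
    obtain ⟨hdeg, i₀, hF0⟩ := hcon
    have hev : ∀ i : Fin N, ∀ᶠ ε in 𝓝 (0:ℝ),
        D.a i 0 = 0 → 0 < D.lam * u i 0 + D.H i 0 (p i + ε) := by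
      intro i
      by_cases ha : D.a i 0 = 0
      · have hc : ContinuousAt (fun ε : ℝ => D.lam * u i 0 + D.H i 0 (p i + ε)) 0 :=
          (continuousAt_const.add (Hcont0 D i (fun ε => p i + ε) (by fun_prop)))
        have h0 : 0 < D.lam * u i 0 + D.H i 0 (p i + 0) := by
          rw [add_zero]; exact hdeg i ha
        filter_upwards [hc.eventually (eventually_gt_nhds h0)] with ε h _
        exact h
      · exact Filter.Eventually.of_forall fun ε h => absurd h ha
    have hevF : ∀ᶠ ε in 𝓝 (0:ℝ), 0 < D.F (u i₀ 0) (fun j => p j + ε) := by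
      have hc : ContinuousAt (fun ε : ℝ => D.F (u i₀ 0) (fun j => p j + ε)) 0 := by
        have : Continuous fun ε : ℝ => D.F (u i₀ 0) (fun j => p j + ε) :=
          D.F_cont.comp (continuous_const.prodMk
            (continuous_pi fun j => continuous_const.add continuous_id))
        exact this.continuousAt
      have h0 : 0 < D.F (u i₀ 0) (fun j => p j + 0) := by simpa using hF0
      exact hc.eventually (eventually_gt_nhds h0)
    have hall := ((Filter.eventually_all.2 hev).and hevF).filter_mono
      (nhdsWithin_le_nhds (s := Set.Ioi (0:ℝ)))
    obtain ⟨ε, hεpos, hdeg', hF'⟩ :=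
      ((eventually_mem_nhdsWithin (s := Set.Ioi (0:ℝ))).and hall).exists
    rcases sub_eps D u p hu hp hεpos with ⟨i, hai, hle⟩ | h
    · exact absurd hle (not_le.2 (hdeg' i hai))
    · exact absurd (h i₀) (not_le.2 hF')
  · intro v q hv hq
    by_contra hcon
    push_neg at hcon
    obtain ⟨hdeg, i₀, hF0⟩ := hcon
    have hev : ∀ i : Fin N, ∀ᶠ ε in 𝓝 (0:ℝ),
        D.a i 0 = 0 → D.lam * v i 0 + D.H i 0 (q i - ε) < 0 := by
      intro i
      by_cases ha : D.a i 0 = 0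
      · have hc : ContinuousAt (fun ε : ℝ => D.lam * v i 0 + D.H i 0 (q i - ε)) 0 :=
          (continuousAt_const.add (Hcont0 D i (fun ε => q i - ε) (by fun_prop)))
        have h0 : D.lam * v i 0 + D.H i 0 (q i - (0:ℝ)) < 0 := by
          simpa using hdeg i ha
        filter_upwards [hc.eventually (eventually_lt_nhds h0)] with ε h _
        exact h
      · exact Filter.Eventually.of_forall fun ε h => absurd h ha
    have hevF : ∀ᶠ ε in 𝓝 (0:ℝ), D.F (v i₀ 0) (fun j => q j - ε) < 0 := by
      have hc : ContinuousAt (fun ε : ℝ => D.F (v i₀ 0) (fun j => q j - ε)) 0 := by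
        have : Continuous fun ε : ℝ => D.F (v i₀ 0) (fun j => q j - ε) :=
          D.F_cont.comp (continuous_const.prodMk
            (continuous_pi fun j => continuous_const.sub continuous_id))
        exact this.continuousAt
      have h0 : D.F (v i₀ 0) (fun j => q j - 0) < 0 := by simpa using hF0
      exact hc.eventually (eventually_lt_nhds h0)
    have hall := ((Filter.eventually_all.2 hev).and hevF).filter_mono
      (nhdsWithin_le_nhds (s := Set.Ioi (0:ℝ)))
    obtain ⟨ε, hεpos, hdeg', hF'⟩ :=
      ((eventually_mem_nhdsWithin (s := Set.Ioi (0:ℝ))).and hall).exists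
    rcases super_eps D v q hv hq hεpos with ⟨i, hai, hle⟩ | h
    · exact absurd hle (not_le.2 (hdeg' i hai))
    · exact absurd (h i₀) (not_le.2 hF')

end Paper
end
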